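/- arXiv:0807.2028 — 5 statements merged into one kernel-verified Lean document; each statement's English description precedes it below -/
import Mathlib

section
/- Let L > 0 and let (x_t) be a trajectory of the continuous-agent Krause model with x₀ ∈ X_L. Then x_{t+1} − x_t →_μ 0, that is: for every ε > 0 there exists T such that for all t ≥ T, λ({α ∈ [0,1] : |x_{t+1}(α) − x_t(α)| ≥ ε}) < ε. -/
open MeasureTheory

namespace KrauseProof
open Set

noncomputable def m1 : Measure ℝ := volume.restrict (Set.Icc 0 1)
noncomputable def m2 : Measure (ℝ × ℝ) := m1.prod m1

instance : IsProbabilityMeasure m1 :=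
  ⟨by simp [m1, Measure.restrict_apply, Real.volume_Icc]⟩
instance : IsProbabilityMeasure m2 := by unfold m2; infer_instance

lemma m1_compl_Icc : m1 (Set.Icc (0:ℝ) 1)ᶜ = 0 := by
  rw [m1, Measure.restrict_apply (measurableSet_Icc.compl)]
  simp

lemma ae_fst {P : ℝ → Prop} (h : ∀ α ∈ Set.Icc (0:ℝ) 1, P α) :
    ∀ᵐ p ∂m2, P p.1 := by
  rw [ae_iff]
  refine measure_mono_null (t := (Set.Icc (0:ℝ) 1)ᶜ ×ˢ Set.univ) (fun p hp => ?_) ?_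
  · exact Set.mem_prod.2 ⟨fun h1 => hp (h p.1 h1), Set.mem_univ _⟩
  · have : m2 ((Set.Icc (0:ℝ) 1)ᶜ ×ˢ Set.univ) = m1 (Set.Icc (0:ℝ) 1)ᶜ * m1 Set.univ := by
      simp [m2, Measure.prod_prod]
    rw [this, m1_compl_Icc, zero_mul]

lemma ae_snd {P : ℝ → Prop} (h : ∀ α ∈ Set.Icc (0:ℝ) 1, P α) :
    ∀ᵐ p ∂m2, P p.2 := by
  rw [ae_iff]
  refine measure_mono_null (t := Set.univ ×ˢ (Set.Icc (0:ℝ) 1)ᶜ) (fun p hp => ?_) ?_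
  · exact Set.mem_prod.2 ⟨Set.mem_univ _, fun h1 => hp (h p.2 h1)⟩
  · have : m2 (Set.univ ×ˢ (Set.Icc (0:ℝ) 1)ᶜ) = m1 Set.univ * m1 (Set.Icc (0:ℝ) 1)ᶜ := by
      simp [m2, Measure.prod_prod]
    rw [this, m1_compl_Icc, mul_zero]

lemma integrable_of_bound {f : ℝ × ℝ → ℝ} (hf : Measurable f) (C : ℝ)
    (h : ∀ p : ℝ × ℝ, p.1 ∈ Set.Icc (0:ℝ) 1 → p.2 ∈ Set.Icc (0:ℝ) 1 → |f p| ≤ C) :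
    Integrable f m2 := by
  refine (integrable_const C).mono' hf.aestronglyMeasurable ?_
  filter_upwards [ae_fst (P := fun a => a ∈ Set.Icc (0:ℝ) 1) (fun _ h => h),
    ae_snd (P := fun a => a ∈ Set.Icc (0:ℝ) 1) (fun _ h => h)] with p h1 h2
  simpa using h p h1 h2

def Kset (x : ℝ → ℝ) : Set (ℝ × ℝ) := {p | |x p.1 - x p.2| < 1}

def Nset (x : ℝ → ℝ) (α : ℝ) : Set ℝ := {β ∈ Set.Icc (0:ℝ) 1 | |x α - x β| < 1}

lemma measurableSet_Kset {x : ℝ → ℝ} (hx : Measurable x) : MeasurableSet (Kset x) :=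
  measurableSet_lt (((hx.comp measurable_fst).sub (hx.comp measurable_snd)).abs)
    measurable_const

lemma measurableSet_Nset {x : ℝ → ℝ} (hx : Measurable x) (α : ℝ) :
    MeasurableSet (Nset x α) :=
  measurableSet_Icc.inter (measurableSet_lt ((measurable_const.sub hx).abs) measurable_const)

lemma Nset_subset {x : ℝ → ℝ} (α : ℝ) : Nset x α ⊆ Set.Icc (0:ℝ) 1 := fun _ h => h.1

lemma volume_Nset_ne_top {x : ℝ → ℝ} (α : ℝ) : volume (Nset x α) ≠ ⊤ := by
  refine ne_top_of_le_ne_top ?_ (measure_mono (Nset_subset α))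
  simp [Real.volume_Icc]

lemma integrableOn_Nset {L : ℝ} {x f : ℝ → ℝ} (hx : Measurable x) (hf : Measurable f)
    (hbf : ∀ α ∈ Set.Icc (0:ℝ) 1, |f α| ≤ L) (α : ℝ) :
    IntegrableOn f (Nset x α) volume := by
  refine Integrable.mono' (g := fun _ => L) (integrableOn_const (volume_Nset_ne_top α)) hf.aestronglyMeasurable ?_
  rw [ae_restrict_iff' (measurableSet_Nset hx α)]
  exact ae_of_all _ (fun β hβ => hbf β hβ.1)

/-- The fundamental consequence of the update rule. -/
lemma update_integral {L : ℝ} {x y : ℝ → ℝ} (hx : Measurable x)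
    (hbx : ∀ α ∈ Set.Icc (0:ℝ) 1, x α ∈ Set.Icc 0 L)
    (hup : ∀ α ∈ Set.Icc (0:ℝ) 1,
      y α = if volume (Nset x α) = 0 then x α
        else (∫ β in Nset x α, x β) / (volume (Nset x α)).toReal)
    {α : ℝ} (hα : α ∈ Set.Icc (0:ℝ) 1) :
    ∫ β in Nset x α, x β = (volume (Nset x α)).toReal * y α := by
  by_cases h0 : volume (Nset x α) = 0
  · rw [h0, ENNReal.toReal_zero, zero_mul, Measure.restrict_eq_zero.2 h0,
      integral_zero_measure]
  · rw [hup α hα, if_neg h0]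
    have ht : (volume (Nset x α)).toReal ≠ 0 :=
      ENNReal.toReal_ne_zero.2 ⟨h0, volume_Nset_ne_top α⟩
    field_simp

lemma update_integral_zero {L : ℝ} {x y : ℝ → ℝ} (hx : Measurable x) (hy : Measurable y)
    (hL : 0 ≤ L)
    (hbx : ∀ α ∈ Set.Icc (0:ℝ) 1, x α ∈ Set.Icc 0 L)
    (hup : ∀ α ∈ Set.Icc (0:ℝ) 1,
      y α = if volume (Nset x α) = 0 then x α
        else (∫ β in Nset x α, x β) / (volume (Nset x α)).toReal)
    {α : ℝ} (hα : α ∈ Set.Icc (0:ℝ) 1) :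
    ∫ β in Nset x α, (y α - x β) = 0 := by
  have hix : IntegrableOn x (Nset x α) volume := by
    refine integrableOn_Nset (L := L) hx hx (fun β hβ => ?_) α
    have := hbx β hβ; rw [abs_le]; constructor <;> [linarith [this.1]; exact this.2]
  rw [integral_sub (integrableOn_const (μ := volume) (s := Nset x α) (C := y α) (ne_of_lt ?_)) hix]
  · rw [setIntegral_const, update_integral hx hbx hup hα]
    simp [smul_eq_mul, mul_comm, measureReal_def]
  · exact lt_of_le_of_ne (le_top) (volume_Nset_ne_top α)


lemma abs_diff_le {L a b : ℝ} (ha : a ∈ Set.Icc 0 L) (hb : b ∈ Set.Icc 0 L) :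
    |a - b| ≤ L :=
  abs_le.2 ⟨by linarith [ha.1, hb.2], by linarith [ha.2, hb.1]⟩

noncomputable def V (x : ℝ → ℝ) : ℝ := ∫ p, min ((x p.1 - x p.2)^2) 1 ∂m2

noncomputable def S (x y : ℝ → ℝ) : ℝ :=
  ∫ p in Kset x, ((y p.1 - x p.1) + (y p.2 - x p.2))^2 ∂m2

section Decrement

variable {L : ℝ} {x y : ℝ → ℝ}

lemma integrable_min_sq (hx : Measurable x)  :
    Integrable (fun p : ℝ × ℝ => min ((x p.1 - x p.2)^2) 1) m2 := by
  refine integrable_of_bound (Measurable.min (((hx.comp measurable_fst).sub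
    (hx.comp measurable_snd)).pow_const 2) measurable_const) 1 (fun p _ _ => ?_)
  rw [abs_le]
  constructor
  · have : (0:ℝ) ≤ min ((x p.1 - x p.2)^2) 1 := le_min (sq_nonneg _) zero_le_one
    linarith
  · exact min_le_right _ _

lemma integrable_sq (hL : 0 < L) (hx : Measurable x)
    (hbx : ∀ α ∈ Set.Icc (0:ℝ) 1, x α ∈ Set.Icc 0 L) :
    Integrable (fun p : ℝ × ℝ => (x p.1 - x p.2)^2) m2 := by
  refine integrable_of_bound (((hx.comp measurable_fst).sub
    (hx.comp measurable_snd)).pow_const 2) (L^2) (fun p h1 h2 => ?_)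
  have h := abs_diff_le (hbx p.1 h1) (hbx p.2 h2)
  rw [abs_of_nonneg (sq_nonneg _), ← sq_abs]
  exact pow_le_pow_left₀ (abs_nonneg _) h 2

lemma integrable_g (hL : 0 < L) (hx : Measurable x) (hy : Measurable y)
    (hbx : ∀ α ∈ Set.Icc (0:ℝ) 1, x α ∈ Set.Icc 0 L)
    (hby : ∀ α ∈ Set.Icc (0:ℝ) 1, y α ∈ Set.Icc 0 L) :
    Integrable (fun p : ℝ × ℝ => ((y p.1 - x p.1) + (y p.2 - x p.2))^2) m2 := by
  refine integrable_of_bound (Measurable.pow_const (Measurable.add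
    ((hy.comp measurable_fst).sub (hx.comp measurable_fst))
    ((hy.comp measurable_snd).sub (hx.comp measurable_snd))) 2) ((2*L)^2)
    (fun p h1 h2 => ?_)
  have d1 := abs_diff_le (hby p.1 h1) (hbx p.1 h1)
  have d2 := abs_diff_le (hby p.2 h2) (hbx p.2 h2)
  have habs : |(y p.1 - x p.1) + (y p.2 - x p.2)| ≤ 2*L :=
    (abs_add_le _ _).trans (by linarith)
  rw [abs_of_nonneg (sq_nonneg _), ← sq_abs]
  exact pow_le_pow_left₀ (abs_nonneg _) habs 2

lemma integrable_F1 (hL : 0 < L) (hx : Measurable x) (hy : Measurable y)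
    (hbx : ∀ α ∈ Set.Icc (0:ℝ) 1, x α ∈ Set.Icc 0 L)
    (hby : ∀ α ∈ Set.Icc (0:ℝ) 1, y α ∈ Set.Icc 0 L) :
    Integrable (fun p : ℝ × ℝ => (y p.1 - x p.1) * (y p.1 - x p.2)) m2 := by
  refine integrable_of_bound (Measurable.mul
    ((hy.comp measurable_fst).sub (hx.comp measurable_fst))
    ((hy.comp measurable_fst).sub (hx.comp measurable_snd))) (L*L)
    (fun p h1 h2 => ?_)
  rw [abs_mul]
  exact mul_le_mul (abs_diff_le (hby p.1 h1) (hbx p.1 h1))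
    (abs_diff_le (hby p.1 h1) (hbx p.2 h2)) (abs_nonneg _) hL.le

lemma integrable_F2 (hL : 0 < L) (hx : Measurable x) (hy : Measurable y)
    (hbx : ∀ α ∈ Set.Icc (0:ℝ) 1, x α ∈ Set.Icc 0 L)
    (hby : ∀ α ∈ Set.Icc (0:ℝ) 1, y α ∈ Set.Icc 0 L) :
    Integrable (fun p : ℝ × ℝ => (y p.2 - x p.2) * (y p.2 - x p.1)) m2 := by
  refine integrable_of_bound (Measurable.mul
    ((hy.comp measurable_snd).sub (hx.comp measurable_snd))
    ((hy.comp measurable_snd).sub (hx.comp measurable_fst))) (L*L)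
    (fun p h1 h2 => ?_)
  rw [abs_mul]
  exact mul_le_mul (abs_diff_le (hby p.2 h2) (hbx p.2 h2))
    (abs_diff_le (hby p.2 h2) (hbx p.1 h1)) (abs_nonneg _) hL.le

lemma inner_indicator_fst (hx : Measurable x) (F : ℝ × ℝ → ℝ) (α : ℝ) :
    ∫ β, (Kset x).indicator F (α, β) ∂m1 = ∫ β in Nset x α, F (α, β) := by
  have hs : MeasurableSet {β : ℝ | |x α - x β| < 1} :=
    measurableSet_lt ((measurable_const.sub hx).abs) measurable_const
  have h1 : (fun β => (Kset x).indicator F (α, β))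
      = {β : ℝ | |x α - x β| < 1}.indicator (fun β => F (α, β)) := by
    funext β
    by_cases h : |x α - x β| < 1
    · exact (Set.indicator_of_mem (show (α, β) ∈ Kset x from h) F).trans
        (Set.indicator_of_mem (show β ∈ {β : ℝ | |x α - x β| < 1} from h)
          (fun β => F (α, β))).symm
    · exact (Set.indicator_of_notMem (show (α, β) ∉ Kset x from h) F).trans
        (Set.indicator_of_notMem (show β ∉ {β : ℝ | |x α - x β| < 1} from h)
          (fun β => F (α, β))).symm
  rw [h1, m1, integral_indicator hs, Measure.restrict_restrict hs]
  congr 1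
  rw [Set.inter_comm]
  rfl

lemma inner_indicator_snd (hx : Measurable x) (F : ℝ × ℝ → ℝ) (β : ℝ) :
    ∫ α, (Kset x).indicator F (α, β) ∂m1 = ∫ α in Nset x β, F (α, β) := by
  have hs : MeasurableSet {α : ℝ | |x β - x α| < 1} :=
    measurableSet_lt ((measurable_const.sub hx).abs) measurable_const
  have h1 : (fun α => (Kset x).indicator F (α, β))
      = {α : ℝ | |x β - x α| < 1}.indicator (fun α => F (α, β)) := by
    funext α
    by_cases h : |x β - x α| < 1
    · have h' : |x α - x β| < 1 := by rwa [abs_sub_comm]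
      exact (Set.indicator_of_mem (show (α, β) ∈ Kset x from h') F).trans
        (Set.indicator_of_mem (show α ∈ {α : ℝ | |x β - x α| < 1} from h)
          (fun α => F (α, β))).symm
    · have h' : ¬ |x α - x β| < 1 := by rwa [abs_sub_comm]
      exact (Set.indicator_of_notMem (show (α, β) ∉ Kset x from h') F).trans
        (Set.indicator_of_notMem (show α ∉ {α : ℝ | |x β - x α| < 1} from h)
          (fun α => F (α, β))).symm
  rw [h1, m1, integral_indicator hs, Measure.restrict_restrict hs]
  congr 1
  rw [Set.inter_comm]
  rfl

variable (hL : 0 < L) (hx : Measurable x) (hy : Measurable y)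
  (hbx : ∀ α ∈ Set.Icc (0:ℝ) 1, x α ∈ Set.Icc 0 L)
  (hby : ∀ α ∈ Set.Icc (0:ℝ) 1, y α ∈ Set.Icc 0 L)
  (hup : ∀ α ∈ Set.Icc (0:ℝ) 1,
    y α = if volume (Nset x α) = 0 then x α
      else (∫ β in Nset x α, x β) / (volume (Nset x α)).toReal)

include hL hx hy hbx hby hup in
lemma Z1_zero :
    ∫ p in Kset x, (y p.1 - x p.1) * (y p.1 - x p.2) ∂m2 = 0 := by
  rw [← integral_indicator (measurableSet_Kset hx)]
  have hint : Integrable ((Kset x).indicator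
      (fun p : ℝ × ℝ => (y p.1 - x p.1) * (y p.1 - x p.2))) m2 :=
    ((integrable_F1 hL hx hy hbx hby).integrableOn).integrable_indicator
      (measurableSet_Kset hx)
  rw [show m2 = m1.prod m1 from rfl] at hint ⊢
  rw [MeasureTheory.integral_prod _ hint]
  have hz : ∀ α ∈ Set.Icc (0:ℝ) 1,
      (∫ β, (Kset x).indicator
        (fun p : ℝ × ℝ => (y p.1 - x p.1) * (y p.1 - x p.2)) (α, β) ∂m1) = 0 := by
    intro α hα
    rw [inner_indicator_fst hx _ α]
    have : (∫ β in Nset x α, (y α - x α) * (y α - x β))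
        = (y α - x α) * ∫ β in Nset x α, (y α - x β) := integral_const_mul _ _
    rw [this, update_integral_zero (L := L) hx hy hL.le hbx hup hα, mul_zero]
  refine integral_eq_zero_of_ae ?_
  have : ∀ᵐ α ∂m1, α ∈ Set.Icc (0:ℝ) 1 := by
    rw [show (m1 : Measure ℝ) = volume.restrict (Set.Icc 0 1) from rfl]
    exact ae_restrict_mem measurableSet_Icc
  filter_upwards [this] with α hα
  exact hz α hα

include hL hx hy hbx hby hup in
lemma Z2_zero :
    ∫ p in Kset x, (y p.2 - x p.2) * (y p.2 - x p.1) ∂m2 = 0 := by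
  rw [← integral_indicator (measurableSet_Kset hx)]
  have hint : Integrable ((Kset x).indicator
      (fun p : ℝ × ℝ => (y p.2 - x p.2) * (y p.2 - x p.1))) m2 :=
    ((integrable_F2 hL hx hy hbx hby).integrableOn).integrable_indicator
      (measurableSet_Kset hx)
  rw [show m2 = m1.prod m1 from rfl] at hint ⊢
  rw [MeasureTheory.integral_prod_symm _ hint]
  have hz : ∀ β ∈ Set.Icc (0:ℝ) 1,
      (∫ α, (Kset x).indicator
        (fun p : ℝ × ℝ => (y p.2 - x p.2) * (y p.2 - x p.1)) (α, β) ∂m1) = 0 := by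
    intro β hβ
    rw [inner_indicator_snd hx _ β]
    have : (∫ α in Nset x β, (y β - x β) * (y β - x α))
        = (y β - x β) * ∫ α in Nset x β, (y β - x α) := integral_const_mul _ _
    rw [this, update_integral_zero (L := L) hx hy hL.le hbx hup hβ, mul_zero]
  refine integral_eq_zero_of_ae ?_
  have : ∀ᵐ α ∂m1, α ∈ Set.Icc (0:ℝ) 1 := by
    rw [show (m1 : Measure ℝ) = volume.restrict (Set.Icc 0 1) from rfl]
    exact ae_restrict_mem measurableSet_Icc
  filter_upwards [this] with α hα
  exact hz α hα

include hL hx hy hbx hby hup in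
lemma decrement : V y + S x y ≤ V x := by
  set K := Kset x with hKdef
  have hK : MeasurableSet K := measurableSet_Kset hx
  have Imx := integrable_min_sq (x := x) hx
  have Imy := integrable_min_sq (x := y) hy
  have Ia := integrable_sq hL hx hbx
  have Ib := integrable_sq hL hy hby
  have Ig := integrable_g hL hx hy hbx hby
  have IF1 := integrable_F1 hL hx hy hbx hby
  have IF2 := integrable_F2 hL hx hy hbx hby
  have step1 : V x = (∫ p in K, (x p.1 - x p.2)^2 ∂m2) + (m2 Kᶜ).toReal := by
    have h := integral_add_compl hK Imx
    rw [V, ← h]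
    congr 1
    · refine setIntegral_congr_fun hK (fun p hp => ?_)
      have habs : |x p.1 - x p.2| < 1 := hp
      rw [abs_lt] at habs
      exact min_eq_left (by nlinarith)
    · have : ∀ p ∈ Kᶜ, min ((x p.1 - x p.2)^2) 1 = (1:ℝ) := by
        intro p hp
        have habs : ¬ |x p.1 - x p.2| < 1 := hp
        push_neg at habs
        refine min_eq_right ?_
        calc (1:ℝ) = 1 * 1 := (one_mul 1).symm
          _ ≤ |x p.1 - x p.2| * |x p.1 - x p.2| :=
            mul_le_mul habs habs zero_le_one (abs_nonneg _)
          _ = (x p.1 - x p.2)^2 := by rw [← abs_mul, ← sq, abs_of_nonneg (sq_nonneg _)]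
      rw [setIntegral_congr_fun hK.compl this, setIntegral_const, smul_eq_mul, mul_one, measureReal_def]
  have step2 : V y ≤ (∫ p in K, (y p.1 - y p.2)^2 ∂m2) + (m2 Kᶜ).toReal := by
    have h := integral_add_compl hK Imy
    rw [V, ← h]
    refine add_le_add ?_ ?_
    · exact setIntegral_mono_on Imy.integrableOn Ib.integrableOn hK
        (fun p _ => min_le_left _ _)
    · have h1 : (∫ p in Kᶜ, min ((y p.1 - y p.2)^2) 1 ∂m2) ≤ ∫ p in Kᶜ, (1:ℝ) ∂m2 :=
        setIntegral_mono_on Imy.integrableOn (integrable_const 1).integrableOn hK.compl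
          (fun p _ => min_le_right _ _)
      rw [setIntegral_const, smul_eq_mul, mul_one] at h1
      exact h1
  have step3 : (∫ p in K, (x p.1 - x p.2)^2 ∂m2)
      = (∫ p in K, (y p.1 - y p.2)^2 ∂m2) + S x y := by
    have hring : (fun p : ℝ × ℝ => (x p.1 - x p.2)^2)
        = fun p : ℝ × ℝ => ((y p.1 - y p.2)^2 + ((y p.1 - x p.1) + (y p.2 - x p.2))^2)
          - (2*((y p.1 - x p.1) * (y p.1 - x p.2))
             + 2*((y p.2 - x p.2) * (y p.2 - x p.1))) := by
      funext p; ring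
    have IbIg : Integrable (fun p : ℝ × ℝ =>
        (y p.1 - y p.2)^2 + ((y p.1 - x p.1) + (y p.2 - x p.2))^2) m2 := Ib.add Ig
    have IF12 : Integrable (fun p : ℝ × ℝ =>
        2*((y p.1 - x p.1) * (y p.1 - x p.2))
        + 2*((y p.2 - x p.2) * (y p.2 - x p.1))) m2 :=
      (IF1.const_mul 2).add (IF2.const_mul 2)
    rw [hring]
    rw [integral_sub IbIg.integrableOn IF12.integrableOn,
      integral_add Ib.integrableOn Ig.integrableOn,
      integral_add ((IF1.const_mul 2).integrableOn) ((IF2.const_mul 2).integrableOn),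
      integral_const_mul, integral_const_mul, hKdef,
      Z1_zero hL hx hy hbx hby hup, Z2_zero hL hx hy hbx hby hup]
    rw [S]
    ring
  linarith [step1, step2, step3]

end Decrement


lemma S_nonneg {x y : ℝ → ℝ} (hx : Measurable x) : 0 ≤ S x y :=
  setIntegral_nonneg (measurableSet_Kset hx) (fun _ _ => sq_nonneg _)

lemma V_nonneg {x : ℝ → ℝ} : 0 ≤ V x :=
  integral_nonneg (fun _ => le_min (sq_nonneg _) zero_le_one)

lemma V_le_one {x : ℝ → ℝ} (hx : Measurable x) : V x ≤ 1 := by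
  have h : V x ≤ ∫ _ in Set.univ, (1:ℝ) ∂m2 := by
    rw [Measure.restrict_univ]
    exact integral_mono (integrable_min_sq hx) (integrable_const 1)
      (fun _ => min_le_right _ _)
  rw [setIntegral_const] at h
  simpa using h

lemma onesided {L : ℝ} {x y : ℝ → ℝ} (hL : 0 < L) (hx : Measurable x) (hy : Measurable y)
    (hbx : ∀ α ∈ Set.Icc (0:ℝ) 1, x α ∈ Set.Icc 0 L)
    (hby : ∀ α ∈ Set.Icc (0:ℝ) 1, y α ∈ Set.Icc 0 L)
    {ε : ℝ} (hε : 0 < ε) {A : Set ℝ} (hA : MeasurableSet A)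
    (hAΩ : A ⊆ Set.Icc (0:ℝ) 1)
    (hAsub : ∀ α ∈ A, ∀ β ∈ A, 4*ε^2 ≤ ((y α - x α) + (y β - x β))^2)
    {N : ℕ} (hN : 2*L < N) :
    ((volume A).toReal)^2 * (4*ε^2) ≤ N * S x y := by
  classical
  set B : ℕ → Set ℝ := fun k => A ∩ x ⁻¹' (Set.Ico ((k:ℝ)/2) (((k:ℝ)+1)/2)) with hB
  have hBmeas : ∀ k, MeasurableSet (B k) := fun k => hA.inter (hx measurableSet_Ico)
  have hBsub : ∀ k, B k ⊆ A := fun k => Set.inter_subset_left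
  have hBdisj : ∀ k j : ℕ, k ≠ j → Disjoint (B k) (B j) := by
    intro k j hkj
    have hico : Disjoint (Set.Ico ((k:ℝ)/2) (((k:ℝ)+1)/2))
        (Set.Ico ((j:ℝ)/2) (((j:ℝ)+1)/2)) := by
      rcases lt_or_gt_of_ne hkj with h | h
      · refine Set.Ico_disjoint_Ico.2 ?_
        have : ((k:ℝ)+1)/2 ≤ (j:ℝ)/2 := by
          have : (k:ℝ) + 1 ≤ (j:ℝ) := by exact_mod_cast h
          linarith
        exact le_trans (inf_le_left) (le_trans this le_sup_right)
      · refine Set.Ico_disjoint_Ico.2 ?_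
        have : ((j:ℝ)+1)/2 ≤ (k:ℝ)/2 := by
          have : (j:ℝ) + 1 ≤ (k:ℝ) := by exact_mod_cast h
          linarith
        exact le_trans (inf_le_right) (le_trans this le_sup_left)
    exact ((hico.preimage x).mono Set.inter_subset_right Set.inter_subset_right)
  have hcover : A = ⋃ k ∈ Finset.range N, B k := by
    apply Set.Subset.antisymm
    · intro α hα
      have hxα := hbx α (hAΩ hα)
      have h2x : (0:ℝ) ≤ 2 * x α := by linarith [hxα.1]
      refine Set.mem_biUnion (Finset.mem_range.2 ((Nat.floor_lt h2x).2 ?_)) ?_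
      · calc 2 * x α ≤ 2 * L := by linarith [hxα.2]
          _ < N := hN
      · refine ⟨hα, ?_, ?_⟩
        · have := Nat.floor_le h2x
          linarith
        · have := Nat.lt_floor_add_one (2 * x α)
          linarith
    · exact Set.iUnion₂_subset (fun k _ => hBsub k)
  set U : Set (ℝ × ℝ) := ⋃ k ∈ Finset.range N, (B k) ×ˢ (B k) with hU
  have hUmeas : MeasurableSet U :=
    MeasurableSet.biUnion (Finset.range N).countable_toSet
      (fun k _ => (hBmeas k).prod (hBmeas k))
  have hUK : U ⊆ Kset x := by
    refine Set.iUnion₂_subset (fun k _ p hp => ?_)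
    obtain ⟨h1, h2⟩ := hp
    have q1 := h1.2
    have q2 := h2.2
    simp only [Set.mem_preimage, Set.mem_Ico] at q1 q2
    show |x p.1 - x p.2| < 1
    rw [abs_lt]
    constructor <;> linarith
  have hIg := integrable_g hL hx hy hbx hby
  have hSgeU : (∫ p in U, ((y p.1 - x p.1) + (y p.2 - x p.2))^2 ∂m2) ≤ S x y := by
    refine setIntegral_mono_set hIg.integrableOn ?_ (HasSubset.Subset.eventuallyLE hUK)
    exact ae_of_all _ (fun p => sq_nonneg _)
  have hconst : (m2 U).toReal * (4*ε^2)
      ≤ ∫ p in U, ((y p.1 - x p.1) + (y p.2 - x p.2))^2 ∂m2 := by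
    have h := setIntegral_mono_on (f := fun _ => 4*ε^2) (integrableOn_const
        (measure_ne_top m2 U)) hIg.integrableOn hUmeas
      (fun p hp => ?_)
    · rw [setIntegral_const, smul_eq_mul] at h
      exact h
    · obtain ⟨k, hk, hpk⟩ := Set.mem_iUnion₂.1 hp
      exact hAsub p.1 (hBsub k hpk.1) p.2 (hBsub k hpk.2)
  have hm1B : ∀ k, m1 (B k) = volume (B k) := by
    intro k
    rw [show (m1 : Measure ℝ) = volume.restrict (Set.Icc 0 1) from rfl,
      Measure.restrict_apply (hBmeas k),
      Set.inter_eq_self_of_subset_left ((hBsub k).trans hAΩ)]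
  have hm2U : (m2 U).toReal = ∑ k ∈ Finset.range N, ((volume (B k)).toReal)^2 := by
    rw [hU, measure_biUnion_finset ?_ (fun k _ => (hBmeas k).prod (hBmeas k))]
    · rw [ENNReal.toReal_sum (fun k _ => measure_ne_top m2 _)]
      refine Finset.sum_congr rfl (fun k _ => ?_)
      rw [show (m2 : Measure (ℝ × ℝ)) = m1.prod m1 from rfl, Measure.prod_prod,
        ENNReal.toReal_mul, hm1B k, sq]
    · intro k hk j hj hkj
      have hd := hBdisj k j hkj
      rw [Set.disjoint_left] at hd
      show Disjoint (B k ×ˢ B k) (B j ×ˢ B j)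
      rw [Set.disjoint_left]
      rintro p ⟨hp1, _⟩ ⟨hq1, _⟩
      exact hd hp1 hq1
  have hvolA : (volume A).toReal = ∑ k ∈ Finset.range N, (volume (B k)).toReal := by
    rw [hcover, measure_biUnion_finset ?_ (fun k _ => hBmeas k)]
    · exact ENNReal.toReal_sum (fun k _ => ne_top_of_le_ne_top (by simp [Real.volume_Icc])
        (measure_mono ((hBsub k).trans hAΩ)))
    · intro k hk j hj hkj
      exact hBdisj k j hkj
  have hcs := Finset.sum_mul_sq_le_sq_mul_sq (Finset.range N)
    (fun k => (volume (B k)).toReal) (fun _ => (1:ℝ))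
  simp only [mul_one, one_pow, Finset.sum_const, Finset.card_range, nsmul_eq_mul] at hcs
  -- hcs : (∑ vk)^2 ≤ (∑ vk^2) * N
  have key : ((volume A).toReal)^2 ≤ (m2 U).toReal * N := by
    rw [hvolA, hm2U]
    calc (∑ k ∈ Finset.range N, (volume (B k)).toReal)^2
        ≤ (∑ k ∈ Finset.range N, ((volume (B k)).toReal)^2) * N := hcs
      _ = _ := rfl
  have hεsq : (0:ℝ) < 4*ε^2 := by positivity
  calc ((volume A).toReal)^2 * (4*ε^2) ≤ ((m2 U).toReal * N) * (4*ε^2) :=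
        mul_le_mul_of_nonneg_right key hεsq.le
    _ = (N:ℝ) * ((m2 U).toReal * (4*ε^2)) := by ring
    _ ≤ (N:ℝ) * ∫ p in U, ((y p.1 - x p.1) + (y p.2 - x p.2))^2 ∂m2 :=
        mul_le_mul_of_nonneg_left hconst (Nat.cast_nonneg N)
    _ ≤ (N:ℝ) * S x y := mul_le_mul_of_nonneg_left hSgeU (Nat.cast_nonneg N)


end KrauseProof

open KrauseProof Filter

/-- `(x_t)` is a trajectory of the continuous-agent Krause model in `X_L`:
each `x_t` is measurable, maps `[0,1]` into `[0,L]`, and the update rule holds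
on `[0,1]` (with the convention that the opinion stays unchanged when the
neighborhood has measure zero). -/
def IsKrauseTraj (L : ℝ) (x : ℕ → ℝ → ℝ) : Prop :=
  (∀ t, Measurable (x t)) ∧
  (∀ t, ∀ α ∈ Set.Icc (0 : ℝ) 1, x t α ∈ Set.Icc (0 : ℝ) L) ∧
  (∀ t, ∀ α ∈ Set.Icc (0 : ℝ) 1,
    x (t + 1) α =
      if volume {β ∈ Set.Icc (0 : ℝ) 1 | |x t α - x t β| < 1} = 0 then x t α
      else (∫ β in {β ∈ Set.Icc (0 : ℝ) 1 | |x t α - x t β| < 1}, x t β) /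
        (volume {β ∈ Set.Icc (0 : ℝ) 1 | |x t α - x t β| < 1}).toReal)

/-- Along any trajectory of the continuous-agent Krause model,
`x_{t+1} − x_t →_μ 0`. -/
theorem krause_continuum_delta_to_zero (L : ℝ) (hL : 0 < L) (x : ℕ → ℝ → ℝ)
    (htraj : IsKrauseTraj L x) :
    ∀ ε > (0 : ℝ), ∃ T : ℕ, ∀ t ≥ T,
      volume {α ∈ Set.Icc (0 : ℝ) 1 | ε ≤ |x (t + 1) α - x t α|} <
        ENNReal.ofReal ε := by
  obtain ⟨hm, hb, hup0⟩ := htraj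
  have hup : ∀ t, ∀ α ∈ Set.Icc (0:ℝ) 1,
      x (t+1) α = if volume (Nset (x t) α) = 0 then x t α
        else (∫ β in Nset (x t) α, x t β) / (volume (Nset (x t) α)).toReal :=
    fun t α hα => hup0 t α hα
  -- Lyapunov decrease and summability
  have hdec : ∀ t, V (x (t+1)) + S (x t) (x (t+1)) ≤ V (x t) :=
    fun t => decrement hL (hm t) (hm (t+1)) (hb t) (hb (t+1)) (hup t)
  have hSnn : ∀ t, 0 ≤ S (x t) (x (t+1)) := fun t => S_nonneg (hm t)
  have hpartial : ∀ n, ∑ i ∈ Finset.range n, S (x i) (x (i+1)) ≤ 1 := by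
    intro n
    have h1 : ∑ i ∈ Finset.range n, S (x i) (x (i+1)) ≤ V (x 0) - V (x n) := by
      induction n with
      | zero => simp
      | succ n ih =>
        rw [Finset.sum_range_succ]
        have := hdec n
        linarith
    have h2 := V_le_one (hm 0)
    have h3 : (0:ℝ) ≤ V (x n) := V_nonneg
    linarith
  have hsum : Summable (fun t => S (x t) (x (t+1))) :=
    summable_of_sum_range_le hSnn hpartial
  have hto : Tendsto (fun t => S (x t) (x (t+1))) atTop (nhds 0) :=
    hsum.tendsto_atTop_zero
  intro ε hε
  set N : ℕ := ⌈2*L⌉₊ + 1 with hNdef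
  have hN : 2*L < N := by
    have h1 := Nat.le_ceil (2*L)
    have h2 : ((⌈2*L⌉₊ : ℕ) : ℝ) < N := by
      exact_mod_cast Nat.lt_succ_self _
    linarith
  have hNpos : (0:ℝ) < N := lt_of_le_of_lt (by positivity) hN
  set c : ℝ := ε^4 / (4*N) with hc
  have hcpos : 0 < c := by positivity
  obtain ⟨T, hT⟩ := eventually_atTop.1 (hto.eventually_lt_const hcpos)
  refine ⟨T, fun t ht => ?_⟩
  have hSt : S (x t) (x (t+1)) < c := hT t ht
  -- the three sets
  set d : ℝ → ℝ := fun α => x (t+1) α - x t α with hd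
  set E : Set ℝ := {α ∈ Set.Icc (0:ℝ) 1 | ε ≤ |d α|} with hE
  set Ap : Set ℝ := {α ∈ Set.Icc (0:ℝ) 1 | ε ≤ d α} with hAp
  set Am : Set ℝ := {α ∈ Set.Icc (0:ℝ) 1 | d α ≤ -ε} with hAm
  have hdmeas : Measurable d := (hm (t+1)).sub (hm t)
  have hApmeas : MeasurableSet Ap :=
    measurableSet_Icc.inter (measurableSet_le measurable_const hdmeas)
  have hAmmeas : MeasurableSet Am :=
    measurableSet_Icc.inter (measurableSet_le hdmeas measurable_const)
  have hsub : E ⊆ Ap ∪ Am := by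
    rintro α ⟨hα, habs⟩
    rcases le_abs.1 habs with h | h
    · exact Or.inl ⟨hα, h⟩
    · exact Or.inr ⟨hα, by linarith⟩
  -- one-sided bounds
  have hOp : ((volume Ap).toReal)^2 * (4*ε^2) ≤ N * S (x t) (x (t+1)) := by
    refine onesided hL (hm t) (hm (t+1)) (hb t) (hb (t+1)) hε hApmeas
      (fun α hα => hα.1) (fun α hα β hβ => ?_) hN
    have h1 := hα.2
    have h2 := hβ.2
    show 4*ε^2 ≤ (d α + d β)^2
    nlinarith [sq_nonneg (d α + d β - 2*ε), mul_pos hε hε]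
  have hOm : ((volume Am).toReal)^2 * (4*ε^2) ≤ N * S (x t) (x (t+1)) := by
    refine onesided hL (hm t) (hm (t+1)) (hb t) (hb (t+1)) hε hAmmeas
      (fun α hα => hα.1) (fun α hα β hβ => ?_) hN
    have h1 := hα.2
    have h2 := hβ.2
    show 4*ε^2 ≤ (d α + d β)^2
    nlinarith [sq_nonneg (d α + d β + 2*ε), mul_pos hε hε]
  -- convert to real bounds
  have hfin : ∀ s : Set ℝ, s ⊆ Set.Icc (0:ℝ) 1 → volume s ≠ ⊤ := by
    intro s hs
    refine ne_top_of_le_ne_top ?_ (measure_mono hs)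
    simp [Real.volume_Icc]
  have hApfin := hfin Ap (fun α hα => hα.1)
  have hAmfin := hfin Am (fun α hα => hα.1)
  have hEfin := hfin E (fun α hα => hα.1)
  have hNSbound : N * S (x t) (x (t+1)) < N * c :=
    mul_lt_mul_of_pos_left hSt hNpos
  have hNc : N * c = ε^4/4 := by
    rw [hc]
    field_simp
  have hquarter : ∀ s : Set ℝ, ((volume s).toReal)^2 * (4*ε^2) ≤ N * S (x t) (x (t+1)) →
      (volume s).toReal < ε/4 + ε/8 := by
    intro s hbound
    have hnn : 0 ≤ (volume s).toReal := ENNReal.toReal_nonneg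
    have hlt : ((volume s).toReal)^2 * (4*ε^2) < ε^4/4 := by
      calc ((volume s).toReal)^2 * (4*ε^2) ≤ N * S (x t) (x (t+1)) := hbound
        _ < N * c := hNSbound
        _ = ε^4/4 := hNc
    have h4 : (0:ℝ) < 4*ε^2 := by positivity
    have hsq : ((volume s).toReal)^2 < ε^2/16 := by
      have h5 : ((volume s).toReal)^2 < (ε^4/4) / (4*ε^2) := (lt_div_iff₀ h4).2 hlt
      have h6 : (ε^4/4) / (4*ε^2) = ε^2/16 := by
        field_simp
        ring
      linarith [h5, h6.symm.le, h6.le]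
    nlinarith [hsq, hnn, hε]
  have hap := hquarter Ap hOp
  have ham := hquarter Am hOm
  have hEle : (volume E).toReal ≤ (volume Ap).toReal + (volume Am).toReal := by
    have h1 : volume E ≤ volume Ap + volume Am :=
      le_trans (measure_mono hsub) (measure_union_le _ _)
    have h2 : (volume Ap + volume Am).toReal
        = (volume Ap).toReal + (volume Am).toReal :=
      ENNReal.toReal_add hApfin hAmfin
    calc (volume E).toReal ≤ (volume Ap + volume Am).toReal :=
          ENNReal.toReal_mono (by finiteness) h1
      _ = _ := h2
  have hfinal : (volume E).toReal < ε := by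
    calc (volume E).toReal ≤ (volume Ap).toReal + (volume Am).toReal := hEle
      _ < (ε/4 + ε/8) + (ε/4 + ε/8) := by linarith
      _ < ε := by linarith
  exact (ENNReal.lt_ofReal_iff_toReal_lt hEfin).2 hfinal
end

section
/- Let L > 0 and let U : X_L → X_L denote the one-step update operator of the continuous-agent Krause model. A function x ∈ X_L is a fixed point of the model, i.e. (U(x))(α) = x(α) for almost every α ∈ [0,1], if and only if there exists s ∈ F such that x(α) = s(α) for almost every α ∈ [0,1]. -/
open MeasureTheory

/-- The one-step update operator `U` of the continuous-agent Krause model. -/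
noncomputable def Uop (x : ℝ → ℝ) : ℝ → ℝ := fun α =>
  if volume {β ∈ Set.Icc (0 : ℝ) 1 | |x α - x β| < 1} = 0 then x α
  else (∫ β in {β ∈ Set.Icc (0 : ℝ) 1 | |x α - x β| < 1}, x β) /
    (volume {β ∈ Set.Icc (0 : ℝ) 1 | |x α - x β| < 1}).toReal

/-- `F`: measurable functions `[0,1] → [0,L]` whose values on `[0,1]` are
pairwise either equal or at distance at least 1. -/
def Fset (L : ℝ) : Set (ℝ → ℝ) :=
  {s | Measurable s ∧ (∀ α ∈ Set.Icc (0 : ℝ) 1, s α ∈ Set.Icc (0 : ℝ) L) ∧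
    ∀ α ∈ Set.Icc (0 : ℝ) 1, ∀ β ∈ Set.Icc (0 : ℝ) 1,
      s α = s β ∨ 1 ≤ |s α - s β|}

/-- Cluster lemma: if `m` is an "essential infimum"-type point (every right
neighborhood has positive measure, and `(m-1, m)` is null), then for a
fixed-point-type measure the interval `(m, m+1)` is null. -/
lemma krause_aux_lemA (μ : Measure ℝ) [IsProbabilityMeasure μ]
    (HQ : ∀ s : Set ℝ, MeasurableSet s → μ s ≠ 0 → ∃ t ∈ s,
      μ (Set.Ioo (t-1) (t+1)) = 0 ∨
        (∫ y in Set.Ioo (t-1) (t+1), y ∂μ) = t * (μ (Set.Ioo (t-1) (t+1))).toReal)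
    (m : ℝ) (h1 : ∀ δ : ℝ, 0 < δ → μ (Set.Ico m (m+δ)) ≠ 0)
    (h2 : μ (Set.Ioo (m-1) m) = 0) :
    μ (Set.Ioo m (m+1)) = 0 := by
  have key : ∀ δ : ℝ, 0 < δ → μ (Set.Ico (m+δ) (m+1)) = 0 := by
    intro δ hδ
    rcases le_or_gt 1 δ with hδ1 | hδ1
    · rw [Set.Ico_eq_empty (by intro h; simp at h; linarith)]
      exact measure_empty
    set M := (μ (Set.Ico (m+δ) (m+1))).toReal with hM
    have hMnn : 0 ≤ M := ENNReal.toReal_nonneg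
    have hbound : ∀ ε : ℝ, 0 < ε → ε < δ → (δ - ε) * M ≤ ε := by
      intro ε hε hεδ
      have hε1 : ε < 1 := hεδ.trans hδ1
      obtain ⟨t, ht, hQ⟩ := HQ (Set.Ico m (m+ε)) measurableSet_Ico (h1 ε hε)
      have htm : m ≤ t := ht.1
      have htm' : t < m + ε := ht.2
      set B := Set.Ioo (t-1) (t+1) with hB
      have hsub : Set.Ico m (m+ε) ⊆ B := by
        rintro y ⟨hy1, hy2⟩; exact ⟨by linarith, by linarith⟩
      rcases hQ with h0 | heq
      · exact absurd (measure_mono_null hsub h0) (h1 ε hε)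
      have hintid : IntegrableOn (fun y => y) B μ :=
        (continuous_id.integrableOn_Icc).mono_set Set.Ioo_subset_Icc_self
      have hintc : IntegrableOn (fun _ => t) B μ :=
        integrableOn_const (measure_ne_top μ B)
      have hint : IntegrableOn (fun y => y - t) B μ := hintid.sub hintc
      have h0int : (∫ y in B, (y - t) ∂μ) = 0 := by
        rw [integral_sub hintid hintc, heq, setIntegral_const, smul_eq_mul, measureReal_def]
        ring
      set S1 := B ∩ Set.Iio (t+(δ-ε)) with hS1
      set S2 := Set.Ico (t+(δ-ε)) (t+1) with hS2
      have hdeps : 0 < δ - ε := by linarith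
      have hsplit : S1 ∪ S2 = B := by
        ext y
        simp only [hS1, hS2, hB, Set.mem_union, Set.mem_inter_iff, Set.mem_Ioo,
          Set.mem_Iio, Set.mem_Ico]
        constructor
        · rintro (⟨hy, _⟩ | ⟨hy1, hy2⟩)
          · exact hy
          · exact ⟨by linarith, hy2⟩
        · intro hy
          rcases lt_or_ge y (t+(δ-ε)) with h | h
          · exact Or.inl ⟨hy, h⟩
          · exact Or.inr ⟨h, hy.2⟩
      have hdisj : Disjoint S1 S2 := by
        rw [Set.disjoint_left]
        rintro y ⟨-, hy⟩ ⟨hy', -⟩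
        exact absurd hy' (not_le.mpr hy)
      have hS1m : MeasurableSet S1 := measurableSet_Ioo.inter measurableSet_Iio
      have hS2m : MeasurableSet S2 := measurableSet_Ico
      have hintS1 : IntegrableOn (fun y => y - t) S1 μ :=
        hint.mono_set Set.inter_subset_left
      have hintS2 : IntegrableOn (fun y => y - t) S2 μ := by
        apply hint.mono_set
        rintro y ⟨hy1, hy2⟩; exact ⟨by linarith, hy2⟩
      have hiu : (∫ y in S1, (y - t) ∂μ) + (∫ y in S2, (y - t) ∂μ) = 0 := by
        rw [← setIntegral_union hdisj hS2m hintS1 hintS2, hsplit, h0int]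
      -- lower bound on S1 integral
      have hS1ae : S1 =ᵐ[μ] ((S1 ∩ Set.Ici m : Set ℝ)) := by
        rw [ae_eq_set]
        refine ⟨measure_mono_null ?_ h2, by simp [Set.diff_eq_empty.mpr Set.inter_subset_left]⟩
        rintro y ⟨hyS, hyc⟩
        have hym : ¬ m ≤ y := fun h => hyc ⟨hyS, h⟩
        push_neg at hym
        obtain ⟨⟨hy1, hy2⟩, -⟩ := hyS
        exact ⟨by linarith, hym⟩
      have hS1eq : (∫ y in S1, (y - t) ∂μ) = ∫ y in S1 ∩ Set.Ici m, (y - t) ∂μ :=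
        setIntegral_congr_set hS1ae
      have hS1lb : -ε * (μ (S1 ∩ Set.Ici m)).toReal ≤ ∫ y in S1 ∩ Set.Ici m, (y - t) ∂μ := by
        rw [← measureReal_def, mul_comm, ← smul_eq_mul]
        apply setIntegral_ge_of_const_le (hS1m.inter measurableSet_Ici) (measure_ne_top μ _)
        · rintro y ⟨-, hy⟩
          simp only [Set.mem_Ici] at hy
          linarith
        · exact hintS1.mono_set Set.inter_subset_left
      have htoReal1 : (μ (S1 ∩ Set.Ici m)).toReal ≤ 1 := by
        have h := prob_le_one (μ := μ) (s := S1 ∩ Set.Ici m)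
        have h' := ENNReal.toReal_mono (by simp) h
        simpa using h'
      have hS1lb' : -ε ≤ ∫ y in S1, (y - t) ∂μ := by
        rw [hS1eq]
        nlinarith [ENNReal.toReal_nonneg (a := μ (S1 ∩ Set.Ici m))]
      -- lower bound on S2 integral
      have hS2lb : (δ - ε) * (μ S2).toReal ≤ ∫ y in S2, (y - t) ∂μ := by
        rw [← measureReal_def, mul_comm, ← smul_eq_mul]
        apply setIntegral_ge_of_const_le hS2m (measure_ne_top μ _)
        · rintro y ⟨hy, -⟩
          linarith
        · exact hintS2
      have hMle : M ≤ (μ S2).toReal := by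
        apply ENNReal.toReal_mono (measure_ne_top μ _)
        apply measure_mono
        rintro y ⟨hy1, hy2⟩
        exact ⟨by linarith, by linarith⟩
      nlinarith
    -- conclude M = 0
    have hM0 : M ≤ 0 := by
      by_contra h
      push_neg at h
      have hε : (0:ℝ) < min (δ/2) (δ*M/4) := by positivity
      have hεδ : min (δ/2) (δ*M/4) < δ := lt_of_le_of_lt (min_le_left _ _) (by linarith)
      have hb := hbound _ hε hεδ
      have h1' : min (δ/2) (δ*M/4) ≤ δ/2 := min_le_left _ _
      have h2' : min (δ/2) (δ*M/4) ≤ δ*M/4 := min_le_right _ _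
      nlinarith
    have hMz : M = 0 := le_antisymm hM0 hMnn
    have := (ENNReal.toReal_eq_zero_iff _).mp hMz
    rcases this with h | h
    · exact h
    · exact absurd h (measure_ne_top μ _)
  have hcover : Set.Ioo m (m+1) ⊆ ⋃ n : ℕ, Set.Ico (m + 1/(n+1)) (m+1) := by
    intro y hy
    obtain ⟨n, hn⟩ := exists_nat_one_div_lt (sub_pos.mpr hy.1)
    exact Set.mem_iUnion.mpr ⟨n, ⟨by linarith, hy.2⟩⟩
  exact measure_mono_null hcover (measure_iUnion_null fun n => key _ (by positivity))

/-- Inductive construction of the cluster set above a level `c`. -/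
lemma krause_aux_lemB (μ : Measure ℝ) [IsProbabilityMeasure μ]
    (HQ : ∀ s : Set ℝ, MeasurableSet s → μ s ≠ 0 → ∃ t ∈ s,
      μ (Set.Ioo (t-1) (t+1)) = 0 ∨
        (∫ y in Set.Ioo (t-1) (t+1), y ∂μ) = t * (μ (Set.Ioo (t-1) (t+1))).toReal)
    (L : ℝ) (htop : μ (Set.Ioi L) = 0) :
    ∀ n : ℕ, ∀ c : ℝ, L < c + n → μ (Set.Ioo (c-1) c) = 0 →
      ∃ D : Finset ℝ, (∀ a ∈ D, c ≤ a ∧ a ≤ L) ∧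
        (∀ a ∈ D, ∀ b ∈ D, a = b ∨ 1 ≤ |a - b|) ∧ μ (Set.Ici c \ ↑D) = 0 := by
  intro n
  induction n with
  | zero =>
    intro c hc _
    refine ⟨∅, by simp, by simp, ?_⟩
    simp only [Finset.coe_empty, Set.diff_empty]
    refine measure_mono_null ?_ htop
    intro y hy
    simp only [Set.mem_Ici] at hy
    simp only [Set.mem_Ioi]
    simp only [Nat.cast_zero, add_zero] at hc
    linarith
  | succ n ih =>
    intro c hc hgap
    by_cases hzero : μ (Set.Ici c) = 0
    · refine ⟨∅, by simp, by simp, ?_⟩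
      simpa using hzero
    have hcL : c ≤ L := by
      by_contra h
      push_neg at h
      exact hzero (measure_mono_null (fun y hy => lt_of_lt_of_le h hy) htop)
    set T := {t : ℝ | μ (Set.Icc c t) ≠ 0} with hT
    have hLT : L ∈ T := by
      intro h0
      apply hzero
      have hsub : Set.Ici c ⊆ Set.Icc c L ∪ Set.Ioi L := by
        intro y hy
        rcases le_or_gt y L with h | h
        · exact Or.inl ⟨hy, h⟩
        · exact Or.inr h
      refine le_antisymm ?_ zero_le
      calc μ (Set.Ici c) ≤ μ (Set.Icc c L) + μ (Set.Ioi L) :=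
            le_trans (measure_mono hsub) (measure_union_le _ _)
        _ = 0 := by rw [h0, htop, add_zero]
    have hTne : T.Nonempty := ⟨L, hLT⟩
    have hTlb : ∀ t ∈ T, c ≤ t := by
      intro t ht
      by_contra h
      push_neg at h
      exact ht (by rw [Set.Icc_eq_empty (not_le.mpr h)]; exact measure_empty)
    have hTbdd : BddBelow T := ⟨c, hTlb⟩
    set m := sInf T with hm
    have hcm : c ≤ m := le_csInf hTne hTlb
    have hmL : m ≤ L := csInf_le hTbdd hLT
    have hlow : μ (Set.Ico c m) = 0 := by
      have hsub : Set.Ico c m ⊆ ⋃ k : ℕ, Set.Icc c (m - 1/(k+1)) := by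
        intro y hy
        obtain ⟨k, hk⟩ := exists_nat_one_div_lt (sub_pos.mpr hy.2)
        exact Set.mem_iUnion.mpr ⟨k, hy.1, by linarith⟩
      refine measure_mono_null hsub (measure_iUnion_null fun k => ?_)
      by_contra h
      have hmem : (m - 1/(k+1)) ∈ T := h
      have hle := csInf_le hTbdd hmem
      have hpos : (0:ℝ) < 1/(k+1) := by positivity
      rw [← hm] at hle
      linarith
    have h1 : ∀ δ : ℝ, 0 < δ → μ (Set.Ico m (m+δ)) ≠ 0 := by
      intro δ hδ h0
      obtain ⟨t, htT, htlt⟩ := exists_lt_of_csInf_lt hTne (show sInf T < m + δ by rw [← hm]; linarith)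
      apply htT
      have hsub : Set.Icc c t ⊆ Set.Ico c m ∪ Set.Ico m (m+δ) := by
        intro y hy
        rcases lt_or_ge y m with h | h
        · exact Or.inl ⟨hy.1, h⟩
        · exact Or.inr ⟨h, lt_of_le_of_lt hy.2 htlt⟩
      have := le_trans (measure_mono (μ := μ) hsub) (measure_union_le _ _)
      rw [hlow, h0, add_zero] at this
      exact le_antisymm this zero_le
    have h2 : μ (Set.Ioo (m-1) m) = 0 := by
      have hsub : Set.Ioo (m-1) m ⊆ Set.Ioo (c-1) c ∪ Set.Ico c m := by
        rintro y ⟨hy1, hy2⟩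
        rcases lt_or_ge y c with h | h
        · exact Or.inl ⟨by linarith, h⟩
        · exact Or.inr ⟨h, hy2⟩
      have := le_trans (measure_mono (μ := μ) hsub) (measure_union_le _ _)
      rw [hgap, hlow, add_zero] at this
      exact le_antisymm this zero_le
    have hA : μ (Set.Ioo m (m+1)) = 0 := krause_aux_lemA μ HQ m h1 h2
    obtain ⟨D', hD'b, hD'p, hD'null⟩ := ih (m+1)
      (by push_cast at hc ⊢; linarith)
      (by rw [show m + 1 - 1 = m by ring]; exact hA)
    refine ⟨insert m D', ?_, ?_, ?_⟩
    · intro a ha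
      rcases Finset.mem_insert.mp ha with rfl | ha'
      · exact ⟨hcm, hmL⟩
      · obtain ⟨h1', h2'⟩ := hD'b a ha'
        exact ⟨by linarith, h2'⟩
    · intro a ha b hb
      rcases Finset.mem_insert.mp ha with rfl | ha' <;>
        rcases Finset.mem_insert.mp hb with rfl | hb'
      · exact Or.inl rfl
      · right
        have := (hD'b b hb').1
        rw [abs_sub_comm, abs_of_nonneg (by linarith)]
        linarith
      · right
        have := (hD'b a ha').1
        rw [abs_of_nonneg (by linarith)]
        linarith
      · exact hD'p a ha' b hb'
    · have hsub : Set.Ici c \ ↑(insert m D') ⊆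
          Set.Ico c m ∪ (Set.Ioo m (m+1) ∪ (Set.Ici (m+1) \ ↑D')) := by
        rintro y ⟨hy1, hy2⟩
        simp only [Finset.coe_insert, Set.mem_insert_iff, not_or, Finset.mem_coe] at hy2
        simp only [Set.mem_Ici] at hy1
        rcases lt_or_ge y m with h | h
        · exact Or.inl ⟨hy1, h⟩
        rcases lt_or_ge y (m+1) with h' | h'
        · exact Or.inr (Or.inl ⟨lt_of_le_of_ne h (Ne.symm hy2.1), h'⟩)
        · exact Or.inr (Or.inr ⟨h', hy2.2⟩)
      exact measure_mono_null hsub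
        (measure_union_null hlow (measure_union_null hA hD'null))

/-- `x ∈ X_L` is a fixed point of the continuous-agent Krause
model (i.e. `U(x) = x` almost everywhere on `[0,1]`) if and only if `x` agrees
almost everywhere on `[0,1]` with some element of `F`. -/
theorem krause_continuum_fixed_point_iff (L : ℝ) (hL : 0 < L) (x : ℝ → ℝ)
    (hx : Measurable x) (hrange : ∀ α ∈ Set.Icc (0 : ℝ) 1, x α ∈ Set.Icc (0 : ℝ) L) :
    (∀ᵐ α ∂(volume.restrict (Set.Icc (0 : ℝ) 1)), Uop x α = x α) ↔
    ∃ s ∈ Fset L, ∀ᵐ α ∂(volume.restrict (Set.Icc (0 : ℝ) 1)), x α = s α := by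
  classical
  set ν := volume.restrict (Set.Icc (0:ℝ) 1) with hν
  haveI : IsProbabilityMeasure ν := ⟨by simp [hν, Real.volume_Icc]⟩
  set μ := Measure.map x ν with hμ
  haveI : IsProbabilityMeasure μ := Measure.isProbabilityMeasure_map hx.aemeasurable
  have hset : ∀ a : ℝ, {β ∈ Set.Icc (0:ℝ) 1 | |a - x β| < 1}
      = x ⁻¹' (Set.Ioo (a-1) (a+1)) ∩ Set.Icc 0 1 := by
    intro a
    ext β
    simp only [Set.mem_sep_iff, Set.mem_inter_iff, Set.mem_preimage, Set.mem_Ioo]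
    constructor
    · rintro ⟨hβ, habs⟩
      rw [abs_lt] at habs
      exact ⟨⟨by linarith [habs.1], by linarith [habs.2]⟩, hβ⟩
    · rintro ⟨⟨h1', h2'⟩, hβ⟩
      exact ⟨hβ, abs_lt.mpr ⟨by linarith, by linarith⟩⟩
  have hmeas_eq : ∀ a : ℝ, volume {β ∈ Set.Icc (0:ℝ) 1 | |a - x β| < 1}
      = μ (Set.Ioo (a-1) (a+1)) := by
    intro a
    rw [hμ, Measure.map_apply hx measurableSet_Ioo, hν,
      Measure.restrict_apply (hx measurableSet_Ioo), hset a]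
  have hint_eq : ∀ a : ℝ, (∫ β in {β ∈ Set.Icc (0:ℝ) 1 | |a - x β| < 1}, x β)
      = ∫ y in Set.Ioo (a-1) (a+1), y ∂μ := by
    intro a
    rw [hset a, hμ,
      setIntegral_map (f := fun y : ℝ => y) measurableSet_Ioo
        measurable_id.aestronglyMeasurable hx.aemeasurable,
      hν, Measure.restrict_restrict (hx measurableSet_Ioo)]
  constructor
  · -- forward direction
    intro Hfix
    have hQae : ∀ᵐ α ∂ν, μ (Set.Ioo (x α - 1) (x α + 1)) = 0 ∨
        (∫ y in Set.Ioo (x α - 1) (x α + 1), y ∂μ)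
          = x α * (μ (Set.Ioo (x α - 1) (x α + 1))).toReal := by
      filter_upwards [Hfix] with α hα
      simp only [Uop] at hα
      rw [hmeas_eq (x α), hint_eq (x α)] at hα
      by_cases h0 : μ (Set.Ioo (x α - 1) (x α + 1)) = 0
      · exact Or.inl h0
      · rw [if_neg h0] at hα
        right
        have hne : (μ (Set.Ioo (x α - 1) (x α + 1))).toReal ≠ 0 :=
          ENNReal.toReal_ne_zero.mpr ⟨h0, measure_ne_top μ _⟩
        rw [div_eq_iff hne] at hα
        rw [hα]
    have HQ : ∀ s : Set ℝ, MeasurableSet s → μ s ≠ 0 → ∃ t ∈ s,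
        μ (Set.Ioo (t-1) (t+1)) = 0 ∨
          (∫ y in Set.Ioo (t-1) (t+1), y ∂μ) = t * (μ (Set.Ioo (t-1) (t+1))).toReal := by
      intro s hs hμs
      by_contra h
      push_neg at h
      apply hμs
      rw [hμ, Measure.map_apply hx hs]
      refine measure_mono_null ?_ (ae_iff.mp hQae)
      intro α hα
      simp only [Set.mem_setOf_eq]
      rintro (h0 | heq)
      · exact (h (x α) hα).1 h0
      · exact (h (x α) hα).2 heq
    have hIio : μ (Set.Iio 0) = 0 := by
      rw [hμ, Measure.map_apply hx measurableSet_Iio, hν,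
        Measure.restrict_apply (hx measurableSet_Iio)]
      have : x ⁻¹' Set.Iio 0 ∩ Set.Icc 0 1 = (∅ : Set ℝ) := by
        ext α
        simp only [Set.mem_inter_iff, Set.mem_preimage, Set.mem_Iio, Set.mem_empty_iff_false,
          iff_false, not_and]
        intro h hI
        exact absurd (hrange α hI).1 (not_le.mpr h)
      rw [this, measure_empty]
    have hIoi : μ (Set.Ioi L) = 0 := by
      rw [hμ, Measure.map_apply hx measurableSet_Ioi, hν,
        Measure.restrict_apply (hx measurableSet_Ioi)]
      have : x ⁻¹' Set.Ioi L ∩ Set.Icc 0 1 = (∅ : Set ℝ) := by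
        ext α
        simp only [Set.mem_inter_iff, Set.mem_preimage, Set.mem_Ioi, Set.mem_empty_iff_false,
          iff_false, not_and]
        intro h hI
        exact absurd (hrange α hI).2 (not_le.mpr h)
      rw [this, measure_empty]
    have hgap0 : μ (Set.Ioo ((0:ℝ)-1) 0) = 0 :=
      measure_mono_null (fun y hy => hy.2) hIio
    obtain ⟨D, hDb, hDp, hDnull⟩ := krause_aux_lemB μ HQ L hIoi (⌈L⌉₊ + 1) 0
      (by
        have := Nat.le_ceil L
        push_cast
        linarith)
      hgap0
    have hIci : μ (Set.Ici (0:ℝ)) ≠ 0 := by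
      intro h
      have hsub : (Set.univ : Set ℝ) ⊆ Set.Iio 0 ∪ Set.Ici 0 := by
        intro y _
        rcases lt_or_ge y 0 with h' | h'
        · exact Or.inl h'
        · exact Or.inr h'
      have h1 := le_trans (measure_mono (μ := μ) hsub) (measure_union_le _ _)
      rw [hIio, h, add_zero, measure_univ] at h1
      simp at h1
    have hDne : D.Nonempty := by
      rcases D.eq_empty_or_nonempty with rfl | h
      · exfalso
        apply hIci
        simpa using hDnull
      · exact h
    obtain ⟨d₀, hd₀⟩ := hDne
    have hDms : MeasurableSet (↑D : Set ℝ) := D.finite_toSet.measurableSet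
    refine ⟨(x ⁻¹' (↑D : Set ℝ)).piecewise x (fun _ => d₀), ⟨?_, ?_, ?_⟩, ?_⟩
    · exact Measurable.piecewise (hx hDms) hx measurable_const
    · intro α hα
      by_cases hmem : α ∈ x ⁻¹' (↑D : Set ℝ)
      · rw [Set.piecewise_eq_of_mem _ _ _ hmem]
        exact hrange α hα
      · rw [Set.piecewise_eq_of_notMem _ _ _ hmem]
        have := hDb d₀ hd₀
        exact ⟨this.1, this.2⟩
    · intro α hα β hβ
      have hval : ∀ γ : ℝ, (x ⁻¹' (↑D:Set ℝ)).piecewise x (fun _ => d₀) γ ∈ D := by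
        intro γ
        by_cases hmem : γ ∈ x ⁻¹' (↑D : Set ℝ)
        · rw [Set.piecewise_eq_of_mem _ _ _ hmem]
          exact hmem
        · rw [Set.piecewise_eq_of_notMem _ _ _ hmem]
          exact hd₀
      exact hDp _ (hval α) _ (hval β)
    · have hnull : μ ((↑D : Set ℝ)ᶜ) = 0 := by
        have hsub : (↑D : Set ℝ)ᶜ ⊆ Set.Iio 0 ∪ (Set.Ici 0 \ ↑D) := by
          intro y hy
          rcases lt_or_ge y 0 with h | h
          · exact Or.inl h
          · exact Or.inr ⟨h, hy⟩
        have := le_trans (measure_mono (μ := μ) hsub) (measure_union_le _ _)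
        rw [hIio, hDnull, add_zero] at this
        exact le_antisymm this zero_le
      have hae : ∀ᵐ α ∂ν, x α ∈ (↑D : Set ℝ) := by
        rw [ae_iff]
        have : {α | ¬ x α ∈ (↑D : Set ℝ)} = x ⁻¹' ((↑D : Set ℝ)ᶜ) := rfl
        rw [this, ← Measure.map_apply hx hDms.compl, ← hμ]
        exact hnull
      filter_upwards [hae] with α hαD
      exact (Set.piecewise_eq_of_mem (x ⁻¹' (↑D : Set ℝ)) x (fun _ => d₀)
        (show α ∈ x ⁻¹' (↑D : Set ℝ) from hαD)).symm
  · -- backward direction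
    rintro ⟨s, ⟨hsm, hsr, hsp⟩, hae⟩
    have hE : ν {β | ¬ x β = s β} = 0 := ae_iff.mp hae
    have hE' : volume ({β | ¬ x β = s β} ∩ Set.Icc 0 1) = 0 := by
      rw [hν, Measure.restrict_apply' measurableSet_Icc] at hE
      exact hE
    filter_upwards [hae, ae_restrict_mem measurableSet_Icc] with α hxs hαI
    simp only [Uop]
    set N := {β ∈ Set.Icc (0:ℝ) 1 | |x α - x β| < 1} with hN
    set N' := {β ∈ Set.Icc (0:ℝ) 1 | |s α - s β| < 1} with hN'
    have hN'm : MeasurableSet N' :=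
      measurableSet_Icc.inter
        (measurableSet_lt ((measurable_const.sub hsm).abs) measurable_const)
    have hNd1 : N \ N' ⊆ {β | ¬ x β = s β} ∩ Set.Icc 0 1 := by
      rintro β ⟨⟨hβI, hβ1⟩, hβ2⟩
      refine ⟨fun heq => hβ2 ⟨hβI, by rw [← hxs, ← heq]; exact hβ1⟩, hβI⟩
    have hNd2 : N' \ N ⊆ {β | ¬ x β = s β} ∩ Set.Icc 0 1 := by
      rintro β ⟨⟨hβI, hβ1⟩, hβ2⟩
      refine ⟨fun heq => hβ2 ⟨hβI, by rw [hxs, heq]; exact hβ1⟩, hβI⟩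
    have hNN' : N =ᵐ[volume] N' :=
      ae_eq_set.mpr ⟨measure_mono_null hNd1 hE', measure_mono_null hNd2 hE'⟩
    have hvol : volume N = volume N' := measure_congr hNN'
    have hN'val : Set.EqOn s (fun _ => s α) N' := by
      rintro β ⟨hβI, hβ1⟩
      rcases hsp α hαI β hβI with h | h
      · exact h.symm
      · exfalso; linarith
    have h₁ : (∫ β in N, x β) = ∫ β in N', x β := setIntegral_congr_set hNN'
    have h₂ : (∫ β in N', x β) = ∫ β in N', s β := by
      apply setIntegral_congr_ae hN'm
      rw [ae_iff]
      refine measure_mono_null ?_ hE'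
      intro β hβ
      simp only [Set.mem_setOf_eq, not_forall] at hβ
      obtain ⟨hβN, hβne⟩ := hβ
      exact ⟨hβne, hβN.1⟩
    have h₃ : (∫ β in N', s β) = (volume N').toReal * s α := by
      rw [setIntegral_congr_fun hN'm hN'val, setIntegral_const, smul_eq_mul, measureReal_def]
    by_cases h0 : volume N = 0
    · rw [if_pos h0]
    · rw [if_neg h0, h₁, h₂, h₃, hvol]
      have hne : (volume N').toReal ≠ 0 := by
        refine ENNReal.toReal_ne_zero.mpr ⟨by rw [← hvol]; exact h0, ?_⟩
        have hsub : N' ⊆ Set.Icc (0:ℝ) 1 := fun β hβ => hβ.1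
        have := measure_mono (μ := volume) hsub
        rw [Real.volume_Icc] at this
        exact ne_top_of_le_ne_top (by simp) this
      rw [mul_comm, mul_div_assoc, div_self hne, mul_one, hxs]
end

section
/- Let L > 0 and let s ∈ F be a fixed point of the continuous-agent Krause model. Suppose s is stable. Then for any two distinct values a, b taken by s with μ_s({a}) > 0 and μ_s({b}) > 0, one has |b − a| ≥ 1 + min(μ_s({a}), μ_s({b})) / max(μ_s({a}), μ_s({b})). -/
set_option maxHeartbeats 1000000
set_option linter.unusedSectionVars false


open MeasureTheory

/-- `μ_s({a})`: the measure of the set of agents whose opinion is `a`. -/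
noncomputable def muPoint (s : ℝ → ℝ) (a : ℝ) : ℝ :=
  (volume {α ∈ Set.Icc (0 : ℝ) 1 | s α = a}).toReal

/-- Stability of a fixed point `s` of the continuous-agent Krause model: for
every `ε > 0` there is `δ > 0` such that every trajectory starting `<_μ δ`
close to `s` stays `<_μ ε` close to `s` for all times. -/
def IsStableC (L : ℝ) (s : ℝ → ℝ) : Prop :=
  ∀ ε > (0 : ℝ), ∃ δ > (0 : ℝ), ∀ x : ℕ → ℝ → ℝ, IsKrauseTraj L x →
    volume {α ∈ Set.Icc (0 : ℝ) 1 | δ ≤ |x 0 α - s α|} < ENNReal.ofReal δ →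
    ∀ t : ℕ,
      volume {α ∈ Set.Icc (0 : ℝ) 1 | ε ≤ |x t α - s α|} < ENNReal.ofReal ε



/-- One step of the 3-atom Krause dynamics: masses `A - w` at `p`, `B` at `q`,
`w` at `r`. -/
noncomputable def krStep (A B w p q r : ℝ) : ℝ × ℝ × ℝ :=
  if q - p < 1 then
    (((A - w) * p + w * r + B * q) / (A + B),
     ((A - w) * p + w * r + B * q) / (A + B),
     ((A - w) * p + w * r + B * q) / (A + B))
  else
    (((A - w) * p + w * r) / A,
     (w * r + B * q) / (B + w),
     ((A - w) * p + w * r + B * q) / (A + B))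

noncomputable def krSeq (A B w a b c : ℝ) : ℕ → ℝ × ℝ × ℝ
  | 0 => (a, b, c)
  | t + 1 =>
    krStep A B w (krSeq A B w a b c t).1 (krSeq A B w a b c t).2.1
      (krSeq A B w a b c t).2.2

section KR

variable {A B w a b c κ : ℝ}
variable (hA : 0 < A) (hB : 0 < B) (hw : 0 < w) (hwA : w ≤ A / 2)
  (hc1 : B / (2 * (A + B)) ≤ c - a) (hwAB : w * (A + B) ≤ A * B / 2)
  (hd1 : 1 ≤ b - a)
  (hac : a ≤ c) (hcb : c ≤ b) (hca : c - a ≤ κ) (hbc : b - c ≤ κ)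
  (hκB : B * (b - a) / (A + B) ≤ κ) (hκA : A * (b - a) / (A + B) ≤ κ)
  (hκ1 : κ < 1) (hκ0 : 0 ≤ κ)

include hA hB hw hwA hc1 hwAB hd1 hac hcb hca hbc hκB hκA hκ1 hκ0

lemma kr_inv : ∀ t,
    a ≤ (krSeq A B w a b c t).1 ∧
    (krSeq A B w a b c t).1 ≤ (krSeq A B w a b c t).2.2 ∧
    (krSeq A B w a b c t).2.2 ≤ (krSeq A B w a b c t).2.1 ∧
    (krSeq A B w a b c t).2.1 ≤ b ∧
    (krSeq A B w a b c t).2.2 - (krSeq A B w a b c t).1 ≤ κ ∧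
    (krSeq A B w a b c t).2.1 - (krSeq A B w a b c t).2.2 ≤ κ := by
  have hAB : (0:ℝ) < A + B := by linarith
  intro t
  induction t with
  | zero =>
    simp only [krSeq]
    exact ⟨le_refl a, hac, hcb, le_refl b, hca, hbc⟩
  | succ t ih =>
    obtain ⟨hap, hpr, hrq, hqb, hG, hH⟩ := ih
    set p := (krSeq A B w a b c t).1 with hp
    set q := (krSeq A B w a b c t).2.1 with hq
    set r := (krSeq A B w a b c t).2.2 with hr
    clear_value p q r
    have key : krSeq A B w a b c (t+1) = krStep A B w p q r := by
      rw [hp, hq, hr]; rfl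
    have hqp' : q - p ≤ b - a := by linarith
    have hAw : (0:ℝ) < A - w := by linarith
    have hpq0 : p ≤ q := le_trans hpr hrq
    rw [key, krStep]
    clear key hp hq hr
    by_cases hm : q - p < 1
    · rw [if_pos hm]; dsimp only
      have hpm : p ≤ ((A - w) * p + w * r + B * q) / (A + B) := by
        rw [le_div_iff₀ hAB]
        nlinarith [mul_nonneg hw.le (sub_nonneg.2 hpr),
          mul_nonneg hB.le (sub_nonneg.2 hpq0)]
      have hmq : ((A - w) * p + w * r + B * q) / (A + B) ≤ q := by
        rw [div_le_iff₀ hAB]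
        nlinarith [mul_nonneg hAw.le (sub_nonneg.2 hpq0),
          mul_nonneg hw.le (sub_nonneg.2 hrq)]
      refine ⟨by linarith, le_refl _, le_refl _, by linarith, by simpa using hκ0,
        by simpa using hκ0⟩
    · rw [if_neg hm]; dsimp only
      have hqp1 : 1 ≤ q - p := by linarith [not_lt.mp hm]
      have hBw : (0:ℝ) < B + w := by linarith
      -- p ≤ p'
      have h1 : p ≤ ((A - w) * p + w * r) / A := by
        rw [le_div_iff₀ hA]; nlinarith [mul_nonneg hw.le (sub_nonneg.2 hpr)]
      -- p' ≤ r'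
      have h2 : ((A - w) * p + w * r) / A ≤
          ((A - w) * p + w * r + B * q) / (A + B) := by
        rw [div_le_div_iff₀ hA hAB]
        have t1 : 0 ≤ B * ((A - w) * (q - p) + w * (q - r)) :=
          mul_nonneg hB.le (add_nonneg (mul_nonneg hAw.le (sub_nonneg.2 hpq0))
            (mul_nonneg hw.le (sub_nonneg.2 hrq)))
        linarith [t1]
      -- r' ≤ q'
      have h3 : ((A - w) * p + w * r + B * q) / (A + B) ≤
          (w * r + B * q) / (B + w) := by
        rw [div_le_div_iff₀ hAB hBw]
        have t1 : 0 ≤ (A - w) * (B * (q - p) + w * (r - p)) :=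
          mul_nonneg hAw.le (add_nonneg (mul_nonneg hB.le (sub_nonneg.2 hpq0))
            (mul_nonneg hw.le (sub_nonneg.2 hpr)))
        linarith [t1]
      -- q' ≤ q
      have h4 : (w * r + B * q) / (B + w) ≤ q := by
        rw [div_le_iff₀ hBw]; nlinarith [mul_nonneg hw.le (sub_nonneg.2 hrq)]
      -- G' ≤ κ
      have h5 : ((A - w) * p + w * r + B * q) / (A + B) -
          ((A - w) * p + w * r) / A ≤ κ := by
        refine le_trans ?_ hκB
        rw [div_sub_div _ _ hAB.ne' hA.ne', div_le_div_iff₀ (by positivity) hAB]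
        have t1 : 0 ≤ (A + B) * (B * (w * (r - p))) :=
          mul_nonneg hAB.le (mul_nonneg hB.le (mul_nonneg hw.le (sub_nonneg.2 hpr)))
        have t2 : 0 ≤ (A + B) * (B * A * ((b - a) - (q - p))) :=
          mul_nonneg hAB.le (mul_nonneg (mul_nonneg hB.le hA.le)
            (by linarith))
        linarith [t1, t2]
      -- H' ≤ κ
      have h6 : (w * r + B * q) / (B + w) -
          ((A - w) * p + w * r + B * q) / (A + B) ≤ κ := by
        refine le_trans ?_ hκA
        rw [div_sub_div _ _ hBw.ne' hAB.ne', div_le_div_iff₀ (by positivity) hAB]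
        have hX0 : 0 ≤ B * (q - p) + w * (r - p) :=
          add_nonneg (mul_nonneg hB.le (sub_nonneg.2 hpq0))
            (mul_nonneg hw.le (sub_nonneg.2 hpr))
        have hX1 : B * (q - p) + w * (r - p) ≤ (B + w) * (b - a) := by
          nlinarith [mul_nonneg hB.le (sub_nonneg.2 hqp'),
            mul_nonneg hw.le (sub_nonneg.2 hqp')]
        have t1 : 0 ≤ (A + B) * (w * (B * (q - p) + w * (r - p))) :=
          mul_nonneg hAB.le (mul_nonneg hw.le hX0)
        have t2 : 0 ≤ (A + B) * (A * ((B + w) * (b - a) - (B * (q - p) + w * (r - p)))) :=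
          mul_nonneg hAB.le (mul_nonneg hA.le (by linarith))
        linarith [t1, t2]
      exact ⟨by linarith, h2, h3, by linarith, by linarith, by linarith⟩


lemma kr_G_lb : ∀ t, (∀ k < t, 1 ≤ (krSeq A B w a b c k).2.1 - (krSeq A B w a b c k).1) →
    B / (2 * (A + B)) ≤ (krSeq A B w a b c t).2.2 - (krSeq A B w a b c t).1 := by
  have hAB : (0:ℝ) < A + B := by linarith
  intro t
  match t with
  | 0 => intro _; simpa [krSeq] using hc1
  | (t+1) =>
    intro hpre
    obtain ⟨hap, hpr, hrq, hqb, hG, hH⟩ :=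
      kr_inv hA hB hw hwA hc1 hwAB hd1 hac hcb hca hbc hκB hκA hκ1 hκ0 t
    have hqp1 : 1 ≤ (krSeq A B w a b c t).2.1 - (krSeq A B w a b c t).1 :=
      hpre t (Nat.lt_succ_self t)
    set p := (krSeq A B w a b c t).1 with hp
    set q := (krSeq A B w a b c t).2.1 with hq
    set r := (krSeq A B w a b c t).2.2 with hr
    clear_value p q r
    have key : krSeq A B w a b c (t+1) = krStep A B w p q r := by
      rw [hp, hq, hr]; rfl
    have hm : ¬ q - p < 1 := by linarith
    rw [key, krStep, if_neg hm]
    dsimp only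
    clear key hp hq hr
    have hrp1 : r - p ≤ 1 := by linarith
    rw [div_sub_div _ _ hAB.ne' hA.ne', div_le_div_iff₀ (by positivity) (by positivity)]
    have t1 : 0 ≤ 2 * (A + B) * (B * A * ((q - p) - 1)) :=
      mul_nonneg (by positivity) (mul_nonneg (mul_nonneg hB.le hA.le) (by linarith))
    have t2 : 0 ≤ 2 * (A + B) * (B * w * (1 - (r - p))) :=
      mul_nonneg (by positivity) (mul_nonneg (mul_nonneg hB.le hw.le) (by linarith))
    have t3 : 0 ≤ (A + B) * (B * (A - 2 * w)) :=
      mul_nonneg hAB.le (mul_nonneg hB.le (by linarith))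
    linarith [t1, t2, t3]

lemma kr_drift : ∀ t, (∀ k < t, 1 ≤ (krSeq A B w a b c k).2.1 - (krSeq A B w a b c k).1) →
    a + t * (w * B / (2 * A * (A + B))) ≤ (krSeq A B w a b c t).1 := by
  have hAB : (0:ℝ) < A + B := by linarith
  intro t
  induction t with
  | zero => intro _; simp [krSeq]
  | succ t ih =>
    intro hpre
    have hpre' : ∀ k < t, 1 ≤ (krSeq A B w a b c k).2.1 - (krSeq A B w a b c k).1 :=
      fun k hk => hpre k (hk.trans (Nat.lt_succ_self t))
    have hGlb := kr_G_lb hA hB hw hwA hc1 hwAB hd1 hac hcb hca hbc hκB hκA hκ1 hκ0 t hpre'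
    have hih := ih hpre'
    obtain ⟨hap, hpr, hrq, hqb, hG, hH⟩ :=
      kr_inv hA hB hw hwA hc1 hwAB hd1 hac hcb hca hbc hκB hκA hκ1 hκ0 t
    have hqp1 : 1 ≤ (krSeq A B w a b c t).2.1 - (krSeq A B w a b c t).1 :=
      hpre t (Nat.lt_succ_self t)
    set p := (krSeq A B w a b c t).1 with hp
    set q := (krSeq A B w a b c t).2.1 with hq
    set r := (krSeq A B w a b c t).2.2 with hr
    clear_value p q r
    have key : krSeq A B w a b c (t+1) = krStep A B w p q r := by
      rw [hp, hq, hr]; rfl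
    have hm : ¬ q - p < 1 := by linarith
    rw [key, krStep, if_neg hm]
    dsimp only
    clear key hp hq hr
    have e : ((A - w) * p + w * r) / A = p + w * (r - p) / A := by
      field_simp; ring
    rw [e]
    have hG2 : B ≤ (r - p) * (2 * (A + B)) := (div_le_iff₀ (by positivity)).1 hGlb
    have hstep : w * B / (2 * A * (A + B)) ≤ w * (r - p) / A := by
      rw [div_le_div_iff₀ (by positivity) hA]
      have tt : 0 ≤ (w * A) * ((r - p) * (2 * (A + B)) - B) :=
        mul_nonneg (mul_nonneg hw.le hA.le) (by linarith)
      linarith [tt]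
    have : (t : ℝ) + 1 = ((t + 1 : ℕ) : ℝ) := by push_cast; ring
    push_cast
    linarith [hih, hstep]

lemma kr_merge_exists :
    ∃ t, (krSeq A B w a b c t).2.1 - (krSeq A B w a b c t).1 < 1 := by
  have hAB : (0:ℝ) < A + B := by linarith
  by_contra h
  push_neg at h
  have hσ : 0 < w * B / (2 * A * (A + B)) := by positivity
  obtain ⟨n, hn⟩ := exists_nat_gt ((b - a) / (w * B / (2 * A * (A + B))))
  have h1 := kr_drift hA hB hw hwA hc1 hwAB hd1 hac hcb hca hbc hκB hκA hκ1 hκ0 n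
    (fun k _ => h k)
  obtain ⟨hap, hpr, hrq, hqb, hG, hH⟩ :=
    kr_inv hA hB hw hwA hc1 hwAB hd1 hac hcb hca hbc hκB hκA hκ1 hκ0 n
  have hPb : (krSeq A B w a b c n).1 ≤ b := by linarith
  have h2 : (b - a) < n * (w * B / (2 * A * (A + B))) := by
    rw [div_lt_iff₀ hσ] at hn
    linarith
  linarith

lemma kr_D_half (t : ℕ)
    (h1 : 1 ≤ (krSeq A B w a b c t).2.1 - (krSeq A B w a b c t).1) :
    1 / 2 ≤ (krSeq A B w a b c (t+1)).2.1 - (krSeq A B w a b c (t+1)).1 := by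
  have hAB : (0:ℝ) < A + B := by linarith
  have hBw : (0:ℝ) < B + w := by linarith
  obtain ⟨hap, hpr, hrq, hqb, hG, hH⟩ :=
    kr_inv hA hB hw hwA hc1 hwAB hd1 hac hcb hca hbc hκB hκA hκ1 hκ0 t
  set p := (krSeq A B w a b c t).1 with hp
  set q := (krSeq A B w a b c t).2.1 with hq
  set r := (krSeq A B w a b c t).2.2 with hr
  clear_value p q r
  have key : krSeq A B w a b c (t+1) = krStep A B w p q r := by
    rw [hp, hq, hr]; rfl
  have hm : ¬ q - p < 1 := by linarith
  rw [key, krStep, if_neg hm]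
  dsimp only
  clear key hp hq hr
  have e : (w * r + B * q) / (B + w) - ((A - w) * p + w * r) / A =
      (q - p) - w * (q - r) / (B + w) - w * (r - p) / A := by
    field_simp; ring
  rw [e]
  have b1 : w * (q - r) / (B + w) ≤ w / B := by
    rw [div_le_div_iff₀ hBw hB]
    have tt : 0 ≤ w * (B * (1 - (q - r)) + w) :=
      mul_nonneg hw.le (by nlinarith)
    nlinarith [tt]
  have b2 : w * (r - p) / A ≤ w / A := by
    rw [div_le_div_iff₀ hA hA]
    have tt : 0 ≤ w * A * (1 - (r - p)) :=
      mul_nonneg (mul_nonneg hw.le hA.le) (by linarith)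
    linarith [tt]
  have b3 : w / B + w / A ≤ 1 / 2 := by
    rw [div_add_div _ _ hB.ne' hA.ne', div_le_iff₀ (by positivity)]
    nlinarith [hwAB]
  linarith

lemma kr_final (t : ℕ)
    (hlt : (krSeq A B w a b c t).2.1 - (krSeq A B w a b c t).1 < 1)
    (hhalf : 1 / 2 ≤ (krSeq A B w a b c t).2.1 - (krSeq A B w a b c t).1) :
    a + B / (2 * (A + B)) ≤ (krSeq A B w a b c (t+1)).1 := by
  have hAB : (0:ℝ) < A + B := by linarith
  obtain ⟨hap, hpr, hrq, hqb, hG, hH⟩ :=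
    kr_inv hA hB hw hwA hc1 hwAB hd1 hac hcb hca hbc hκB hκA hκ1 hκ0 t
  set p := (krSeq A B w a b c t).1 with hp
  set q := (krSeq A B w a b c t).2.1 with hq
  set r := (krSeq A B w a b c t).2.2 with hr
  clear_value p q r
  have key : krSeq A B w a b c (t+1) = krStep A B w p q r := by
    rw [hp, hq, hr]; rfl
  rw [key, krStep, if_pos hlt]
  dsimp only
  clear key hp hq hr
  have e : ((A - w) * p + w * r + B * q) / (A + B) =
      p + (w * (r - p) + B * (q - p)) / (A + B) := by
    field_simp; ring
  rw [e]
  have hstep : B / (2 * (A + B)) ≤ (w * (r - p) + B * (q - p)) / (A + B) := by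
    rw [div_le_div_iff₀ (by positivity) hAB]
    have t1 : 0 ≤ 2 * (A + B) * (w * (r - p)) :=
      mul_nonneg (by positivity) (mul_nonneg hw.le (by linarith))
    have t2 : 0 ≤ 2 * (A + B) * (B * ((q - p) - 1/2)) :=
      mul_nonneg (by positivity) (mul_nonneg hB.le (by linarith))
    linarith [t1, t2]
  linarith

end KR

open scoped Classical in
lemma kr_main (L : ℝ) (hL : 0 < L) (s : ℝ → ℝ)
    (hs : s ∈ Fset L) (hstab : IsStableC L s) (a b : ℝ) (hab : a ≠ b)
    (hlt : a < b) (ha : 0 < muPoint s a) (hb : 0 < muPoint s b) :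
    1 + min (muPoint s a) (muPoint s b) / max (muPoint s a) (muPoint s b) ≤
      b - a := by
  by_contra hcon
  push_neg at hcon
  set A := muPoint s a with hA_def
  set B := muPoint s b with hB_def
  set Sa : Set ℝ := {α ∈ Set.Icc (0:ℝ) 1 | s α = a} with hSa_def
  set Sb : Set ℝ := {α ∈ Set.Icc (0:ℝ) 1 | s α = b} with hSb_def
  have hmax : 0 < max A B := lt_max_iff.2 (Or.inl ha)
  have hAB : (0:ℝ) < A + B := by linarith [lt_min_iff.2 ⟨ha, hb⟩]
  -- measurability / finiteness of the cluster sets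
  have hIcc_fin : volume (Set.Icc (0:ℝ) 1) = 1 := by simp [Real.volume_Icc]
  have hsub_fin : ∀ S : Set ℝ, S ⊆ Set.Icc (0:ℝ) 1 → volume S ≠ ⊤ := by
    intro S hS
    exact ne_top_of_le_ne_top (by simp [hIcc_fin]) (measure_mono hS)
  have hSa_sub : Sa ⊆ Set.Icc (0:ℝ) 1 := fun α hα => hα.1
  have hSb_sub : Sb ⊆ Set.Icc (0:ℝ) 1 := fun α hα => hα.1
  have hSa_meas : MeasurableSet Sa := by
    have : Sa = Set.Icc (0:ℝ) 1 ∩ s ⁻¹' {a} := by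
      ext β; simp [hSa_def, Set.mem_preimage, Set.mem_setOf_eq, and_comm]
    rw [this]
    exact measurableSet_Icc.inter (hs.1 (measurableSet_singleton a))
  have hSb_meas : MeasurableSet Sb := by
    have : Sb = Set.Icc (0:ℝ) 1 ∩ s ⁻¹' {b} := by
      ext β; simp [hSb_def, Set.mem_preimage, Set.mem_setOf_eq, and_comm]
    rw [this]
    exact measurableSet_Icc.inter (hs.1 (measurableSet_singleton b))
  have hvolSa : volume Sa = ENNReal.ofReal A :=
    (ENNReal.ofReal_toReal (hsub_fin Sa hSa_sub)).symm
  have hvolSb : volume Sb = ENNReal.ofReal B :=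
    (ENNReal.ofReal_toReal (hsub_fin Sb hSb_sub)).symm
  -- witnesses
  have hSa_ne : Sa.Nonempty := by
    rw [Set.nonempty_iff_ne_empty]
    intro h
    rw [hA_def] at ha
    rw [muPoint] at ha
    have : {α ∈ Set.Icc (0:ℝ) 1 | s α = a} = (∅ : Set ℝ) := h
    rw [this] at ha
    simp at ha
  have hSb_ne : Sb.Nonempty := by
    rw [Set.nonempty_iff_ne_empty]
    intro h
    rw [hB_def] at hb
    rw [muPoint] at hb
    have : {α ∈ Set.Icc (0:ℝ) 1 | s α = b} = (∅ : Set ℝ) := h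
    rw [this] at hb
    simp at hb
  obtain ⟨αa, hαa_mem, hαa⟩ := hSa_ne
  obtain ⟨αb, hαb_mem, hαb⟩ := hSb_ne
  have h0a : 0 ≤ a := by
    have := (hs.2.1 αa hαa_mem).1; rwa [hαa] at this
  have hbL : b ≤ L := by
    have := (hs.2.1 αb hαb_mem).2; rwa [hαb] at this
  have h1ab : 1 ≤ b - a := by
    rcases hs.2.2 αa hαa_mem αb hαb_mem with h | h
    · rw [hαa, hαb] at h; exact absurd h hab
    · rw [hαa, hαb, abs_sub_comm, abs_of_pos (by linarith)] at h; exact h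
  have hab2 : b - a < 2 := by
    have h1 : min A B / max A B ≤ 1 := div_le_one_of_le₀ (min_le_max) hmax.le
    linarith
  -- the contradiction hypothesis rephrased
  have hsum : min A B + max A B = A + B := min_add_max A B
  have hκnum : max A B * (b - a) < A + B := by
    have h2 := mul_lt_mul_of_pos_left hcon hmax
    have h3 : max A B * (1 + min A B / max A B) = max A B + min A B := by
      rw [mul_add, mul_one, mul_div_cancel₀ _ hmax.ne']
    rw [h3] at h2
    linarith [hsum]
  -- choose ε, get δ from stability, choose w
  set ε := min (B / (2 * (A + B))) (A / 2) with hε_def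
  have hε : 0 < ε := lt_min (by positivity) (by positivity)
  obtain ⟨δ, hδ0, hδ⟩ := hstab ε hε
  set w := min (δ / 2) (A * B / (2 * (A + B))) with hw_def
  have hw0 : 0 < w := lt_min (by positivity) (by positivity)
  have hwδ : w < δ := lt_of_le_of_lt (min_le_left _ _) (by linarith)
  have hwABhalf : w ≤ A * B / (2 * (A + B)) := min_le_right _ _
  have hwA : w ≤ A / 2 := by
    refine hwABhalf.trans ?_
    rw [div_le_div_iff₀ (by positivity) (by norm_num : (0:ℝ) < 2)]
    nlinarith [mul_nonneg ha.le ha.le]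
  have hwAB : w * (A + B) ≤ A * B / 2 := by
    have := mul_le_mul_of_nonneg_right hwABhalf hAB.le
    calc w * (A + B) ≤ A * B / (2 * (A + B)) * (A + B) := this
      _ = A * B / 2 := by field_simp
  -- the intermediate position and margin
  set c := (A * a + B * b) / (A + B) with hc_def
  set κ := max A B * (b - a) / (A + B) with hκ_def
  have hκ1 : κ < 1 := by
    rw [hκ_def, div_lt_one hAB]; exact hκnum
  have hκ0 : 0 ≤ κ := by
    rw [hκ_def]; positivity
  have hκB : B * (b - a) / (A + B) ≤ κ := by
    rw [hκ_def]
    have h1 : B * (b - a) ≤ max A B * (b - a) :=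
      mul_le_mul_of_nonneg_right (le_max_right A B) (by linarith)
    have h2 := mul_le_mul_of_nonneg_right h1 (inv_nonneg.2 hAB.le)
    rw [div_eq_mul_inv, div_eq_mul_inv]
    exact h2
  have hκA : A * (b - a) / (A + B) ≤ κ := by
    rw [hκ_def]
    have h1 : A * (b - a) ≤ max A B * (b - a) :=
      mul_le_mul_of_nonneg_right (le_max_left A B) (by linarith)
    have h2 := mul_le_mul_of_nonneg_right h1 (inv_nonneg.2 hAB.le)
    rw [div_eq_mul_inv, div_eq_mul_inv]
    exact h2
  have hca_eq : c - a = B * (b - a) / (A + B) := by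
    rw [hc_def]; field_simp; ring
  have hbc_eq : b - c = A * (b - a) / (A + B) := by
    rw [hc_def]; field_simp; ring
  have hac : a ≤ c := by rw [← sub_nonneg, hca_eq]; positivity
  have hcb : c ≤ b := by rw [← sub_nonneg, hbc_eq]; positivity
  have hca : c - a ≤ κ := by rw [hca_eq]; exact hκB
  have hbc : b - c ≤ κ := by rw [hbc_eq]; exact hκA
  have hc1 : B / (2 * (A + B)) ≤ c - a := by
    rw [hca_eq, div_le_div_iff₀ (by positivity) hAB]
    nlinarith [mul_nonneg hb.le hAB.le]
  -- construct the perturbed set C ⊆ Sa with volume w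
  obtain ⟨C, hC_sub, hC_meas, hvolC⟩ :
      ∃ C ⊆ Sa, MeasurableSet C ∧ volume C = ENNReal.ofReal w := by
    set f : ℝ → ℝ := fun y => (volume (Sa ∩ Set.Iic y)).toReal with hf_def
    have hfin : ∀ y, volume (Sa ∩ Set.Iic y) ≠ ⊤ :=
      fun y => hsub_fin _ ((Set.inter_subset_left).trans hSa_sub)
    have hf_le : ∀ u v : ℝ, u ≤ v → f u ≤ f v ∧ f v ≤ f u + (v - u) := by
      intro u v huv
      constructor
      · exact ENNReal.toReal_mono (hfin v)
          (measure_mono (Set.inter_subset_inter_right _ (Set.Iic_subset_Iic.2 huv)))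
      · have hsub2 : Sa ∩ Set.Iic v ⊆ (Sa ∩ Set.Iic u) ∪ Set.Ioc u v := by
          intro β hβ
          rcases le_or_gt β u with h | h
          · exact Or.inl ⟨hβ.1, h⟩
          · exact Or.inr ⟨h, hβ.2⟩
        have h1 : volume (Sa ∩ Set.Iic v) ≤
            volume (Sa ∩ Set.Iic u) + ENNReal.ofReal (v - u) := by
          refine (measure_mono hsub2).trans ?_
          refine (measure_union_le _ _).trans ?_
          rw [Real.volume_Ioc]
        have h2 : (volume (Sa ∩ Set.Iic u) + ENNReal.ofReal (v - u)).toReal =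
            f u + (v - u) := by
          rw [ENNReal.toReal_add (hfin u) ENNReal.ofReal_ne_top,
            ENNReal.toReal_ofReal (by linarith)]
        calc f v ≤ (volume (Sa ∩ Set.Iic u) + ENNReal.ofReal (v - u)).toReal :=
              ENNReal.toReal_mono (ENNReal.add_ne_top.2 ⟨hfin u, ENNReal.ofReal_ne_top⟩) h1
          _ = f u + (v - u) := h2
    have hf_cont : Continuous f := by
      refine (LipschitzWith.of_dist_le_mul (K := 1) ?_).continuous
      intro x y
      rcases le_total x y with h | h
      · obtain ⟨h1, h2⟩ := hf_le x y h
        rw [Real.dist_eq, Real.dist_eq, abs_of_nonpos (by linarith),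
          abs_of_nonpos (by linarith)]
        push_cast
        linarith
      · obtain ⟨h1, h2⟩ := hf_le y x h
        rw [Real.dist_eq, Real.dist_eq, abs_of_nonneg (by linarith),
          abs_of_nonneg (by linarith)]
        push_cast
        linarith
    have hf0 : f 0 = 0 := by
      have : Sa ∩ Set.Iic 0 ⊆ {0} := by
        intro β hβ
        have h1 : (0:ℝ) ≤ β := (hSa_sub hβ.1).1
        have h2 : β ≤ 0 := hβ.2
        simp [le_antisymm h2 h1]
      have : volume (Sa ∩ Set.Iic 0) ≤ volume ({0} : Set ℝ) := measure_mono this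
      simp only [measure_singleton, le_zero_iff] at this
      rw [hf_def]; simp [this]
    have hf1 : f 1 = A := by
      have : Sa ∩ Set.Iic 1 = Sa := by
        apply Set.inter_eq_left.2
        intro β hβ
        exact (hSa_sub hβ).2
      rw [hf_def]; simp only [this]; rw [hvolSa, ENNReal.toReal_ofReal ha.le]
    have hwmem : w ∈ Set.Icc (f 0) (f 1) := by
      rw [hf0, hf1]
      exact ⟨hw0.le, by linarith⟩
    obtain ⟨y, hy_mem, hy⟩ := intermediate_value_Icc (by norm_num : (0:ℝ) ≤ 1)
      hf_cont.continuousOn hwmem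
    refine ⟨Sa ∩ Set.Iic y, Set.inter_subset_left, hSa_meas.inter measurableSet_Iic, ?_⟩
    rw [← hy, hf_def]
    exact (ENNReal.ofReal_toReal (hfin y)).symm
  -- the trajectory
  set K := krSeq A B w a b c with hK_def
  have hinv := kr_inv ha hb hw0 hwA hc1 hwAB h1ab hac hcb hca hbc hκB hκA hκ1 hκ0
  set x : ℕ → ℝ → ℝ := fun t α =>
    if α ∈ Sa \ C then (K t).1
    else if α ∈ C then (K t).2.2
    else if α ∈ Sb then (K t).2.1
    else s α with hx_def
  have hxEP : ∀ t α, α ∈ Sa \ C → x t α = (K t).1 := by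
    intro t α h; simp only [hx_def]; rw [if_pos h]
  have hxC : ∀ t α, α ∈ C → x t α = (K t).2.2 := by
    intro t α h; simp only [hx_def]
    rw [if_neg (fun hh => hh.2 h), if_pos h]
  have hxSb : ∀ t α, α ∈ Sb → x t α = (K t).2.1 := by
    intro t α h
    have h1 : α ∉ Sa := fun hh => hab (hh.2.symm.trans h.2)
    simp only [hx_def]
    rw [if_neg (fun hh => h1 hh.1), if_neg (fun hh => h1 (hC_sub hh)), if_pos h]
  have hxO : ∀ t α, α ∉ Sa → α ∉ Sb → x t α = s α := by
    intro t α h1 h2; simp only [hx_def]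
    rw [if_neg (fun hh => h1 hh.1), if_neg (fun hh => h1 (hC_sub hh)), if_neg h2]
  -- values of s outside {a, b} are far from [a, b]
  have hfar : ∀ β ∈ Set.Icc (0:ℝ) 1, s β ≠ a → s β ≠ b →
      ∀ v, a ≤ v → v ≤ b → ¬ |v - s β| < 1 := by
    intro β hβ hna hnb v hav hvb
    have h1 : 1 ≤ |a - s β| := by
      rcases hs.2.2 αa hαa_mem β hβ with h | h
      · rw [hαa] at h; exact absurd h.symm hna
      · rwa [hαa] at h
    have h2 : 1 ≤ |b - s β| := by
      rcases hs.2.2 αb hαb_mem β hβ with h | h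
      · rw [hαb] at h; exact absurd h.symm hnb
      · rwa [hαb] at h
    have hcase : s β ≤ a - 1 ∨ b + 1 ≤ s β := by
      rcases le_abs.1 h1 with h | h
      · left; linarith
      · rcases le_abs.1 h2 with h' | h'
        · linarith
        · right; linarith
    intro hlt1
    rw [abs_lt] at hlt1
    rcases hcase with h | h
    · linarith [hlt1.2]
    · linarith [hlt1.1]
  -- integral of x t over a piece where it is constant
  have hpiece : ∀ (t : ℕ) (E : Set ℝ) (v : ℝ), MeasurableSet E →
      E ⊆ Set.Icc (0:ℝ) 1 → (∀ β ∈ E, x t β = v) →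
      IntegrableOn (x t) E volume ∧ (∫ β in E, x t β) = (volume E).toReal * v := by
    intro t E v hE hEsub hEq
    have hfin : volume E ≠ ⊤ := hsub_fin E hEsub
    constructor
    · rw [integrableOn_congr_fun hEq hE]
      exact integrableOn_const hfin
    · rw [setIntegral_congr_fun hE hEq, setIntegral_const, smul_eq_mul]; rfl
  have hEP_meas : MeasurableSet (Sa \ C) := hSa_meas.diff hC_meas
  have hEP_sub : Sa \ C ⊆ Set.Icc (0:ℝ) 1 := (Set.diff_subset).trans hSa_sub
  have hC_sub' : C ⊆ Set.Icc (0:ℝ) 1 := hC_sub.trans hSa_sub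
  have hvolEP : volume (Sa \ C) = ENNReal.ofReal (A - w) := by
    rw [measure_diff hC_sub hC_meas.nullMeasurableSet
        (by rw [hvolC]; exact ENNReal.ofReal_ne_top),
      hvolSa, hvolC, ← ENNReal.ofReal_sub _ hw0.le]
  have hdisj1 : Disjoint (Sa \ C) C :=
    Set.disjoint_left.2 (fun α h1 h2 => h1.2 h2)
  have hdisjSaSb : Disjoint Sa Sb :=
    Set.disjoint_left.2 (fun α h1 h2 => hab (h1.2.symm.trans h2.2))
  have hdisj2 : Disjoint (Sa \ C) Sb := hdisjSaSb.mono_left Set.diff_subset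
  have hdisj3 : Disjoint C Sb := hdisjSaSb.mono_left hC_sub
  -- characterization of neighborhoods for values in [a, b]
  have hchar : ∀ (t : ℕ) (v : ℝ), a ≤ v → v ≤ b → ∀ β,
      (β ∈ Set.Icc (0:ℝ) 1 ∧ |v - x t β| < 1) ↔
      ((β ∈ Sa \ C ∧ |v - (K t).1| < 1) ∨ (β ∈ C ∧ |v - (K t).2.2| < 1) ∨
        (β ∈ Sb ∧ |v - (K t).2.1| < 1)) := by
    intro t v hav hvb β
    constructor
    · rintro ⟨hβ, hd⟩
      by_cases e1 : β ∈ Sa \ C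
      · exact Or.inl ⟨e1, by rwa [hxEP t β e1] at hd⟩
      by_cases e2 : β ∈ C
      · exact Or.inr (Or.inl ⟨e2, by rwa [hxC t β e2] at hd⟩)
      by_cases e3 : β ∈ Sb
      · exact Or.inr (Or.inr ⟨e3, by rwa [hxSb t β e3] at hd⟩)
      · have hβSa : β ∉ Sa := fun hh => e1 ⟨hh, e2⟩
        rw [hxO t β hβSa e3] at hd
        have hna : s β ≠ a := fun hh => hβSa ⟨hβ, hh⟩
        have hnb : s β ≠ b := fun hh => e3 ⟨hβ, hh⟩
        exact absurd hd (hfar β hβ hna hnb v hav hvb)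
    · rintro (⟨hm1, hm2⟩ | ⟨hm1, hm2⟩ | ⟨hm1, hm2⟩)
      · exact ⟨hEP_sub hm1, by rwa [hxEP t β hm1]⟩
      · exact ⟨hC_sub' hm1, by rwa [hxC t β hm1]⟩
      · exact ⟨hSb_sub hm1, by rwa [hxSb t β hm1]⟩
  -- the trajectory is measurable and stays in [0, L]
  have hx_meas : ∀ t, Measurable (x t) := by
    intro t
    simp only [hx_def]
    refine Measurable.ite hEP_meas measurable_const ?_
    refine Measurable.ite hC_meas measurable_const ?_
    exact Measurable.ite hSb_meas measurable_const hs.1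
  have hx_range : ∀ t, ∀ α ∈ Set.Icc (0:ℝ) 1, x t α ∈ Set.Icc (0:ℝ) L := by
    intro t α hα
    obtain ⟨h1, h2, h3, h4, h5, h6⟩ := hinv t
    by_cases e1 : α ∈ Sa \ C
    · rw [hxEP t α e1]; constructor <;> linarith
    by_cases e2 : α ∈ C
    · rw [hxC t α e2]; constructor <;> linarith
    by_cases e3 : α ∈ Sb
    · rw [hxSb t α e3]; constructor <;> linarith
    · have hαSa : α ∉ Sa := fun hh => e1 ⟨hh, e2⟩
      rw [hxO t α hαSa e3]; exact hs.2.1 α hα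
  -- the update rule
  have hx_upd : ∀ t, ∀ α ∈ Set.Icc (0 : ℝ) 1,
      x (t + 1) α =
        if volume {β ∈ Set.Icc (0 : ℝ) 1 | |x t α - x t β| < 1} = 0 then x t α
        else (∫ β in {β ∈ Set.Icc (0 : ℝ) 1 | |x t α - x t β| < 1}, x t β) /
          (volume {β ∈ Set.Icc (0 : ℝ) 1 | |x t α - x t β| < 1}).toReal := by
    intro t α hα
    obtain ⟨h1, h2, h3, h4, h5, h6⟩ := hinv t
    have hAw0 : (0:ℝ) ≤ A - w := by linarith
    have hPb : (K t).1 ≤ b := by linarith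
    have hQa : a ≤ (K t).2.1 := by linarith
    have hRa : a ≤ (K t).2.2 := by linarith
    have hRb : (K t).2.2 ≤ b := by linarith
    have hstep : K (t+1) = krStep A B w (K t).1 (K t).2.1 (K t).2.2 := rfl
    have hself1 : |(K t).1 - (K t).1| < 1 := by simp
    have hself2 : |(K t).2.2 - (K t).2.2| < 1 := by simp
    have hself3 : |(K t).2.1 - (K t).2.1| < 1 := by simp
    have hd12 : |(K t).1 - (K t).2.2| < 1 := by
      rw [abs_sub_comm, abs_of_nonneg (by linarith)]; linarith
    have hd21 : |(K t).2.2 - (K t).1| < 1 := by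
      rw [abs_of_nonneg (by linarith)]; linarith
    have hd23 : |(K t).2.2 - (K t).2.1| < 1 := by
      rw [abs_sub_comm, abs_of_nonneg (by linarith)]; linarith
    have hd32 : |(K t).2.1 - (K t).2.2| < 1 := by
      rw [abs_of_nonneg (by linarith)]; linarith
    -- integrals over the pieces
    obtain ⟨hi1, he1⟩ := hpiece t (Sa \ C) (K t).1 hEP_meas hEP_sub (fun β h => hxEP t β h)
    obtain ⟨hi2, he2⟩ := hpiece t C (K t).2.2 hC_meas hC_sub' (fun β h => hxC t β h)
    obtain ⟨hi3, he3⟩ := hpiece t Sb (K t).2.1 hSb_meas hSb_sub (fun β h => hxSb t β h)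
    have hvEP : (volume (Sa \ C)).toReal = A - w := by
      rw [hvolEP, ENNReal.toReal_ofReal hAw0]
    have hvC : (volume C).toReal = w := by rw [hvolC, ENNReal.toReal_ofReal hw0.le]
    have hvSb : (volume Sb).toReal = B := by rw [hvolSb, ENNReal.toReal_ofReal hb.le]
    have hdisjU3 : Disjoint (Sa \ C) (C ∪ Sb) :=
      Set.disjoint_union_right.2 ⟨hdisj1, hdisj2⟩
    have hvolU3 : volume ((Sa \ C) ∪ (C ∪ Sb)) = ENNReal.ofReal (A + B) := by
      rw [measure_union hdisjU3 (hC_meas.union hSb_meas),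
        measure_union hdisj3 hSb_meas, hvolEP, hvolC, hvolSb,
        ← ENNReal.ofReal_add hw0.le hb.le, ← ENNReal.ofReal_add hAw0 (by linarith)]
      congr 1; ring
    have hintU3 : (∫ β in (Sa \ C) ∪ (C ∪ Sb), x t β) =
        (A - w) * (K t).1 + (w * (K t).2.2 + B * (K t).2.1) := by
      rw [setIntegral_union hdisjU3 (hC_meas.union hSb_meas) hi1 (hi2.union hi3),
        setIntegral_union hdisj3 hSb_meas hi2 hi3, he1, he2, he3, hvEP, hvC, hvSb]
    have hvolU2a : volume ((Sa \ C) ∪ C) = ENNReal.ofReal A := by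
      rw [measure_union hdisj1 hC_meas, hvolEP, hvolC,
        ← ENNReal.ofReal_add hAw0 hw0.le]
      congr 1; ring
    have hintU2a : (∫ β in (Sa \ C) ∪ C, x t β) =
        (A - w) * (K t).1 + w * (K t).2.2 := by
      rw [setIntegral_union hdisj1 hC_meas hi1 hi2, he1, he2, hvEP, hvC]
    have hvolU2b : volume (C ∪ Sb) = ENNReal.ofReal (w + B) := by
      rw [measure_union hdisj3 hSb_meas, hvolC, hvolSb,
        ← ENNReal.ofReal_add hw0.le hb.le]
    have hintU2b : (∫ β in C ∪ Sb, x t β) = w * (K t).2.2 + B * (K t).2.1 := by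
      rw [setIntegral_union hdisj3 hSb_meas hi2 hi3, he2, he3, hvC, hvSb]
    by_cases e1 : α ∈ Sa \ C
    · have hv : x t α = (K t).1 := hxEP t α e1
      by_cases hm : (K t).2.1 - (K t).1 < 1
      · have hd13 : |(K t).1 - (K t).2.1| < 1 := by
          rw [abs_sub_comm, abs_of_nonneg (by linarith)]; linarith
        have hN : {β ∈ Set.Icc (0:ℝ) 1 | |x t α - x t β| < 1} =
            (Sa \ C) ∪ (C ∪ Sb) := by
          ext β
          simp only [Set.mem_setOf_eq, Set.mem_union, hv]
          rw [hchar t (K t).1 h1 hPb β]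
          constructor
          · rintro (hh | hh | hh) <;> tauto
          · rintro (hh | hh | hh)
            · exact Or.inl ⟨hh, hself1⟩
            · exact Or.inr (Or.inl ⟨hh, hd12⟩)
            · exact Or.inr (Or.inr ⟨hh, hd13⟩)
        rw [hN, if_neg (by rw [hvolU3]; exact (ENNReal.ofReal_pos.2 hAB).ne'),
          hintU3, hvolU3, ENNReal.toReal_ofReal hAB.le,
          hxEP (t+1) α e1, hstep, krStep, if_pos hm]
        all_goals (dsimp only; ring)
      · have hd13' : ¬ |(K t).1 - (K t).2.1| < 1 := by
          rw [abs_sub_comm, abs_of_nonneg (by linarith)]; exact hm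
        have hN : {β ∈ Set.Icc (0:ℝ) 1 | |x t α - x t β| < 1} =
            (Sa \ C) ∪ C := by
          ext β
          simp only [Set.mem_setOf_eq, Set.mem_union, hv]
          rw [hchar t (K t).1 h1 hPb β]
          constructor
          · rintro (hh | hh | hh)
            · exact Or.inl hh.1
            · exact Or.inr hh.1
            · exact absurd hh.2 hd13'
          · rintro (hh | hh)
            · exact Or.inl ⟨hh, hself1⟩
            · exact Or.inr (Or.inl ⟨hh, hd12⟩)
        rw [hN, if_neg (by rw [hvolU2a]; exact (ENNReal.ofReal_pos.2 ha).ne'),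
          hintU2a, hvolU2a, ENNReal.toReal_ofReal ha.le,
          hxEP (t+1) α e1, hstep, krStep, if_neg hm]
        all_goals (dsimp only; ring)
    · by_cases e2 : α ∈ C
      · have hv : x t α = (K t).2.2 := hxC t α e2
        have hN : {β ∈ Set.Icc (0:ℝ) 1 | |x t α - x t β| < 1} =
            (Sa \ C) ∪ (C ∪ Sb) := by
          ext β
          simp only [Set.mem_setOf_eq, Set.mem_union, hv]
          rw [hchar t (K t).2.2 hRa hRb β]
          constructor
          · rintro (hh | hh | hh) <;> tauto
          · rintro (hh | hh | hh)
            · exact Or.inl ⟨hh, hd21⟩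
            · exact Or.inr (Or.inl ⟨hh, hself2⟩)
            · exact Or.inr (Or.inr ⟨hh, hd23⟩)
        rw [hN, if_neg (by rw [hvolU3]; exact (ENNReal.ofReal_pos.2 hAB).ne'),
          hintU3, hvolU3, ENNReal.toReal_ofReal hAB.le,
          hxC (t+1) α e2, hstep, krStep]
        by_cases hm : (K t).2.1 - (K t).1 < 1
        · rw [if_pos hm]; all_goals (dsimp only; ring)
        · rw [if_neg hm]; all_goals (dsimp only; ring)
      · by_cases e3 : α ∈ Sb
        · have hv : x t α = (K t).2.1 := hxSb t α e3
          by_cases hm : (K t).2.1 - (K t).1 < 1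
          · have hd31 : |(K t).2.1 - (K t).1| < 1 := by
              rw [abs_of_nonneg (by linarith)]; linarith
            have hN : {β ∈ Set.Icc (0:ℝ) 1 | |x t α - x t β| < 1} =
                (Sa \ C) ∪ (C ∪ Sb) := by
              ext β
              simp only [Set.mem_setOf_eq, Set.mem_union, hv]
              rw [hchar t (K t).2.1 hQa h4 β]
              constructor
              · rintro (hh | hh | hh) <;> tauto
              · rintro (hh | hh | hh)
                · exact Or.inl ⟨hh, hd31⟩
                · exact Or.inr (Or.inl ⟨hh, hd32⟩)
                · exact Or.inr (Or.inr ⟨hh, hself3⟩)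
            rw [hN, if_neg (by rw [hvolU3]; exact (ENNReal.ofReal_pos.2 hAB).ne'),
              hintU3, hvolU3, ENNReal.toReal_ofReal hAB.le,
              hxSb (t+1) α e3, hstep, krStep, if_pos hm]
            all_goals (dsimp only; ring)
          · have hd31' : ¬ |(K t).2.1 - (K t).1| < 1 := by
              rw [abs_of_nonneg (by linarith)]; exact hm
            have hN : {β ∈ Set.Icc (0:ℝ) 1 | |x t α - x t β| < 1} = C ∪ Sb := by
              ext β
              simp only [Set.mem_setOf_eq, Set.mem_union, hv]
              rw [hchar t (K t).2.1 hQa h4 β]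
              constructor
              · rintro (hh | hh | hh)
                · exact absurd hh.2 hd31'
                · exact Or.inl hh.1
                · exact Or.inr hh.1
              · rintro (hh | hh)
                · exact Or.inr (Or.inl ⟨hh, hd32⟩)
                · exact Or.inr (Or.inr ⟨hh, hself3⟩)
            have hwB0 : (0:ℝ) < w + B := by linarith
            have hvolU2b_ne : volume (C ∪ Sb) ≠ 0 := by
              rw [hvolU2b]; exact (ENNReal.ofReal_pos.2 hwB0).ne'
            rw [hN, if_neg hvolU2b_ne,
              hintU2b, hvolU2b, ENNReal.toReal_ofReal hwB0.le,
              hxSb (t+1) α e3, hstep, krStep, if_neg hm]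
            all_goals (dsimp only; ring)
        · -- α outside the moving clusters
          have hαSa : α ∉ Sa := fun hh => e1 ⟨hh, e2⟩
          have hv : x t α = s α := hxO t α hαSa e3
          have hna : s α ≠ a := fun hh => hαSa ⟨hα, hh⟩
          have hnb : s α ≠ b := fun hh => e3 ⟨hα, hh⟩
          have hN : {β ∈ Set.Icc (0:ℝ) 1 | |x t α - x t β| < 1} =
              {β ∈ Set.Icc (0:ℝ) 1 | s β = s α} := by
            ext β
            simp only [Set.mem_setOf_eq, hv]
            constructor
            · rintro ⟨hβ, hd⟩
              refine ⟨hβ, ?_⟩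
              by_cases f1 : β ∈ Sa \ C
              · exfalso
                rw [hxEP t β f1] at hd
                exact hfar α hα hna hnb (K t).1 h1 hPb (by rwa [abs_sub_comm] at hd)
              by_cases f2 : β ∈ C
              · exfalso
                rw [hxC t β f2] at hd
                exact hfar α hα hna hnb (K t).2.2 hRa hRb (by rwa [abs_sub_comm] at hd)
              by_cases f3 : β ∈ Sb
              · exfalso
                rw [hxSb t β f3] at hd
                exact hfar α hα hna hnb (K t).2.1 hQa h4 (by rwa [abs_sub_comm] at hd)
              · have hβSa : β ∉ Sa := fun hh => f1 ⟨hh, f2⟩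
                rw [hxO t β hβSa f3] at hd
                rcases hs.2.2 β hβ α hα with h | h
                · exact h
                · exfalso
                  rw [abs_sub_comm] at h
                  linarith [hd, h]
            · rintro ⟨hβ, hsv⟩
              have hβSa : β ∉ Sa := fun hh => hna (hsv.symm.trans hh.2)
              have hβSb : β ∉ Sb := fun hh => hnb (hsv.symm.trans hh.2)
              refine ⟨hβ, ?_⟩
              rw [hxO t β hβSa hβSb, hsv]
              simpa using zero_lt_one
          have hfib_eq : {β ∈ Set.Icc (0:ℝ) 1 | s β = s α} =
              Set.Icc (0:ℝ) 1 ∩ s ⁻¹' {s α} := by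
            ext β; simp [Set.mem_preimage, Set.mem_setOf_eq]
          have hfib_meas : MeasurableSet {β ∈ Set.Icc (0:ℝ) 1 | s β = s α} := by
            rw [hfib_eq]
            exact measurableSet_Icc.inter (hs.1 (measurableSet_singleton _))
          have hfib_sub : {β ∈ Set.Icc (0:ℝ) 1 | s β = s α} ⊆ Set.Icc (0:ℝ) 1 :=
            fun β h => h.1
          rw [hN]
          by_cases hz : volume {β ∈ Set.Icc (0:ℝ) 1 | s β = s α} = 0
          · rw [if_pos hz, hv]
            exact hxO (t+1) α hαSa e3
          · rw [if_neg hz]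
            obtain ⟨hi, he⟩ := hpiece t _ (s α) hfib_meas hfib_sub (fun β h => by
              have hβSa : β ∉ Sa := fun hh => hna (h.2.symm.trans hh.2)
              have hβSb : β ∉ Sb := fun hh => hnb (h.2.symm.trans hh.2)
              rw [hxO t β hβSa hβSb, h.2])
            rw [he, hxO (t+1) α hαSa e3]
            have hne : (volume {β ∈ Set.Icc (0:ℝ) 1 | s β = s α}).toReal ≠ 0 :=
              ENNReal.toReal_ne_zero.2 ⟨hz, hsub_fin _ hfib_sub⟩
            rw [mul_comm, mul_div_assoc, div_self hne, mul_one]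
  have htraj : IsKrauseTraj L x := ⟨hx_meas, hx_range, hx_upd⟩
  -- initial proximity
  have hinit : volume {α ∈ Set.Icc (0:ℝ) 1 | δ ≤ |x 0 α - s α|} < ENNReal.ofReal δ := by
    have hsub : {α ∈ Set.Icc (0:ℝ) 1 | δ ≤ |x 0 α - s α|} ⊆ C := by
      intro α hα
      by_contra hαC
      have hx0 : x 0 α = s α := by
        by_cases e1 : α ∈ Sa \ C
        · rw [hxEP 0 α e1]
          have : (K 0).1 = a := rfl
          rw [this, e1.1.2]
        by_cases e3 : α ∈ Sb
        · rw [hxSb 0 α e3]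
          have : (K 0).2.1 = b := rfl
          rw [this, e3.2]
        · have hαSa : α ∉ Sa := fun hh => e1 ⟨hh, hαC⟩
          exact hxO 0 α hαSa e3
      obtain ⟨hα1, hα2⟩ := hα
      rw [hx0] at hα2
      simp only [sub_self, abs_zero] at hα2
      linarith
    calc volume {α ∈ Set.Icc (0:ℝ) 1 | δ ≤ |x 0 α - s α|} ≤ volume C :=
          measure_mono hsub
      _ = ENNReal.ofReal w := hvolC
      _ < ENNReal.ofReal δ := (ENNReal.ofReal_lt_ofReal_iff hδ0).2 hwδ
  -- merge time and final displacement
  have hex := kr_merge_exists ha hb hw0 hwA hc1 hwAB h1ab hac hcb hca hbc hκB hκA hκ1 hκ0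
  set τ := Nat.find hex with hτ_def
  have hτ_spec : (K τ).2.1 - (K τ).1 < 1 := Nat.find_spec hex
  have hpre : ∀ k < τ, 1 ≤ (K k).2.1 - (K k).1 :=
    fun k hk => not_lt.1 (Nat.find_min hex hk)
  have hτ0 : τ ≠ 0 := by
    intro h
    rw [h] at hτ_spec
    have e0 : (K 0).2.1 - (K 0).1 = b - a := rfl
    rw [e0] at hτ_spec
    linarith
  obtain ⟨n, hn⟩ := Nat.exists_eq_succ_of_ne_zero hτ0
  have hhalf : 1/2 ≤ (K τ).2.1 - (K τ).1 := by
    rw [hn]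
    exact kr_D_half ha hb hw0 hwA hc1 hwAB h1ab hac hcb hca hbc hκB hκA hκ1 hκ0 n
      (hpre n (by rw [hn]; exact Nat.lt_succ_self n))
  have hfinal : a + B / (2*(A+B)) ≤ (K (τ+1)).1 :=
    kr_final ha hb hw0 hwA hc1 hwAB h1ab hac hcb hca hbc hκB hκA hκ1 hκ0 τ hτ_spec hhalf
  -- contradiction with stability
  have hviol := hδ x htraj hinit (τ+1)
  have hεB : ε ≤ B / (2*(A+B)) := min_le_left _ _
  have hεA : ε ≤ A / 2 := min_le_right _ _
  have hsub2 : Sa \ C ⊆ {α ∈ Set.Icc (0:ℝ) 1 | ε ≤ |x (τ+1) α - s α|} := by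
    intro α hα
    refine ⟨hEP_sub hα, ?_⟩
    rw [hxEP (τ+1) α hα, hα.1.2]
    rw [abs_of_nonneg (by linarith)]
    linarith
  have hge : ENNReal.ofReal ε ≤
      volume {α ∈ Set.Icc (0:ℝ) 1 | ε ≤ |x (τ+1) α - s α|} := by
    refine le_trans ?_ (measure_mono hsub2)
    rw [hvolEP]
    exact ENNReal.ofReal_le_ofReal (by linarith)
  exact absurd hviol (not_lt.2 hge)

/-- If a fixed point `s ∈ F` of the continuous-agent Krause
model is stable, then any two distinct values `a, b` of `s` carrying positive
measure satisfy `|b − a| ≥ 1 + min(μ_s(a), μ_s(b)) / max(μ_s(a), μ_s(b))`. -/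
theorem krause_continuum_stability_necessary (L : ℝ) (hL : 0 < L) (s : ℝ → ℝ)
    (hs : s ∈ Fset L) (hstab : IsStableC L s) (a b : ℝ) (hab : a ≠ b)
    (ha : 0 < muPoint s a) (hb : 0 < muPoint s b) :
    1 + min (muPoint s a) (muPoint s b) / max (muPoint s a) (muPoint s b) ≤
      |b - a| := by
  rcases lt_or_gt_of_ne hab with h | h
  · have h2 := kr_main L hL s hs hstab a b hab h ha hb
    rwa [abs_of_pos (by linarith : (0:ℝ) < b - a)]
  · have h2 := kr_main L hL s hs hstab b a hab.symm h hb ha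
    rw [min_comm, max_comm] at h2
    rwa [abs_sub_comm, abs_of_pos (by linarith : (0:ℝ) < a - b)]
end

section
/- Let L > 0 and let x ∈ X_L be a regular opinion function such that sup_α x(α) − inf_α x(α) > 2. Then U(x) is regular, where U is the one-step update operator of the continuous-agent Krause model. -/
set_option maxHeartbeats 1000000
open MeasureTheory Set

namespace KrauseAux

noncomputable def gfun (μ : Measure ℝ) (v : ℝ) : ℝ :=
  (∫ w in Set.Ioo (v-1) (v+1), w ∂μ) / (μ (Set.Ioo (v-1) (v+1))).toReal

lemma int_on (μ : Measure ℝ) [IsFiniteMeasure μ] (a b : ℝ) (t : Set ℝ)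
    (ht : MeasurableSet t) (hsub : t ⊆ Icc a b) :
    IntegrableOn (fun w : ℝ => w) t μ := by
  apply Measure.integrableOn_of_bounded (measure_ne_top μ t)
    measurable_id.aestronglyMeasurable (M := max |a| |b|)
  rw [ae_restrict_iff' ht]
  filter_upwards with w hw
  rcases hsub hw with ⟨h1, h2⟩
  simpa [Real.norm_eq_abs] using abs_le_max_abs_abs h1 h2

lemma toReal_mono' {A B : Set ℝ} (μ : Measure ℝ) [IsFiniteMeasure μ] (h : A ⊆ B) :
    (μ A).toReal ≤ (μ B).toReal :=
  ENNReal.toReal_mono (measure_ne_top μ B) (measure_mono h)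

lemma len1 {s S v : ℝ} (hSs : s + 2 ≤ S) (h1 : s ≤ v) (h2 : v ≤ S) :
    1 ≤ min (v+1) S - max (v-1) s := by
  rcases le_total (v+1) S with h | h <;> rcases le_total (v-1) s with h' | h' <;>
    simp [min_eq_left, min_eq_right, max_eq_left, max_eq_right, *] <;> linarith

lemma gmean (μ : Measure ℝ) [IsProbabilityMeasure μ] [NullSingletonClass μ]
    (m M s S : ℝ) (hm : 0 < m) (hmM : m ≤ M) (hSs : s + 2 ≤ S)
    (hcompl : μ (Icc s S)ᶜ = 0)
    (hlow : ∀ a b, s ≤ a → a ≤ b → b ≤ S → m*(b-a) ≤ (μ (Icc a b)).toReal)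
    (hupp : ∀ a b, a ≤ b → (μ (Icc a b)).toReal ≤ M*(b-a))
    {v : ℝ} (h1 : s ≤ v) (h2 : v ≤ S) :
    v - 1 + m/(8*M) ≤ gfun μ v ∧ gfun μ v ≤ v + 1 - m/(8*M) := by
  have hM : 0 < M := lt_of_lt_of_le hm hmM
  set p := max (v-1) s with hp
  set q := min (v+1) S with hq
  set r := (p+q)/2 with hr
  have hlen : 1 ≤ q - p := len1 hSs h1 h2
  have hp1 : v - 1 ≤ p := le_max_left _ _
  have hps : s ≤ p := le_max_right _ _
  have hq1 : q ≤ v + 1 := min_le_left _ _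
  have hqS : q ≤ S := min_le_right _ _
  have hpq : p ≤ q := by linarith
  have hpr : p ≤ r := by simp only [hr]; linarith
  have hrq : r ≤ q := by simp only [hr]; linarith
  have hlen2 : q - p ≤ 2 := by linarith
  set I := Ioo (v-1) (v+1) with hI
  set K := I ∩ Icc s S with hK
  have hKmeas : MeasurableSet K := measurableSet_Ioo.inter measurableSet_Icc
  have hK_ae : I =ᵐ[μ] K := by
    rw [MeasureTheory.ae_eq_set]
    constructor
    · exact measure_mono_null (fun w hw hmem => hw.2 ⟨hw.1, hmem⟩) hcompl
    · have : K \ I = ∅ := diff_eq_empty.2 inter_subset_left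
      simp [this]
  have hD_eq : μ I = μ K := measure_congr hK_ae
  have hN_eq : ∫ w in I, w ∂μ = ∫ w in K, w ∂μ := setIntegral_congr_set hK_ae
  have hKsub : K ⊆ Icc p q := by
    rintro w ⟨⟨hw1, hw2⟩, hw3, hw4⟩
    exact ⟨max_le hw1.le hw3, le_min hw2.le hw4⟩
  set K1 := K ∩ Iio r with hK1
  set K2 := K ∩ Ici r with hK2
  have hsplit : K1 ∪ K2 = K := by
    rw [hK1, hK2, ← Set.inter_union_distrib_left, Iio_union_Ici, inter_univ]
  have hdisj : Disjoint K1 K2 := by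
    rw [Set.disjoint_left]
    rintro w ⟨_, hw⟩ hw'
    exact absurd (mem_Ici.1 hw'.2) (not_le.2 (mem_Iio.1 hw))
  have hK1meas : MeasurableSet K1 := hKmeas.inter measurableSet_Iio
  have hK2meas : MeasurableSet K2 := hKmeas.inter measurableSet_Ici
  have hK1sub : K1 ⊆ Icc p q := fun w hw => hKsub hw.1
  have hK2sub : K2 ⊆ Icc p q := fun w hw => hKsub hw.1
  set x1 := (μ K1).toReal with hx1d
  set x2 := (μ K2).toReal with hx2d
  set D := (μ K).toReal with hDd
  set N := ∫ w in K, w ∂μ with hNd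
  have hDadd : x1 + x2 = D := by
    rw [hx1d, hx2d, hDd, ← ENNReal.toReal_add (measure_ne_top μ _) (measure_ne_top μ _),
      ← measure_union hdisj hK2meas, hsplit]
  have hNadd : N = (∫ w in K1, w ∂μ) + ∫ w in K2, w ∂μ := by
    rw [hNd, ← hsplit]
    exact setIntegral_union hdisj hK2meas (int_on μ p q K1 hK1meas hK1sub)
      (int_on μ p q K2 hK2meas hK2sub)
  have hconst : ∀ (t : Set ℝ) (c : ℝ), ∫ _ in t, c ∂μ = (μ t).toReal * c := by
    intro t c; rw [setIntegral_const, smul_eq_mul, measureReal_def]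
  have hK1up : ∫ w in K1, w ∂μ ≤ r * x1 := by
    rw [show r * x1 = (μ K1).toReal * r by rw [hx1d]; ring, ← hconst]
    exact setIntegral_mono_on (int_on μ p q K1 hK1meas hK1sub)
      (integrableOn_const) hK1meas
      (fun w hw => hw.2.le)
  have hK1lo : p * x1 ≤ ∫ w in K1, w ∂μ := by
    rw [show p * x1 = (μ K1).toReal * p by rw [hx1d]; ring, ← hconst]
    exact setIntegral_mono_on (integrableOn_const)
      (int_on μ p q K1 hK1meas hK1sub) hK1meas (fun w hw => (hK1sub hw).1)
  have hK2up : ∫ w in K2, w ∂μ ≤ q * x2 := by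
    rw [show q * x2 = (μ K2).toReal * q by rw [hx2d]; ring, ← hconst]
    exact setIntegral_mono_on (int_on μ p q K2 hK2meas hK2sub)
      (integrableOn_const) hK2meas
      (fun w hw => (hK2sub hw).2)
  have hK2lo : r * x2 ≤ ∫ w in K2, w ∂μ := by
    rw [show r * x2 = (μ K2).toReal * r by rw [hx2d]; ring, ← hconst]
    exact setIntegral_mono_on (integrableOn_const)
      (int_on μ p q K2 hK2meas hK2sub) hK2meas (fun w hw => hw.2)
  have hIccIoo : ∀ a b : ℝ, (μ (Ioo a b)).toReal = (μ (Icc a b)).toReal := by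
    intro a b; rw [measure_congr (Ioo_ae_eq_Icc (μ := μ))]
  have hx1lo : m / 2 ≤ x1 := by
    have hsub1 : Ioo p r ⊆ K1 := by
      rintro w ⟨hw1, hw2⟩
      refine ⟨⟨⟨lt_of_le_of_lt hp1 hw1, lt_of_lt_of_le hw2 (le_trans hrq hq1)⟩,
        le_of_lt (lt_of_le_of_lt hps hw1), le_of_lt (lt_of_lt_of_le hw2 (le_trans hrq hqS))⟩, hw2⟩
    have := toReal_mono' μ hsub1
    rw [hIccIoo] at this
    have h2' := hlow p r hps hpr (le_trans hrq hqS)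
    have hA : m * (r - p) ≤ x1 := le_trans h2' this
    have hrp : 1/2 ≤ r - p := by rw [hr]; linarith
    have hB := mul_le_mul_of_nonneg_left hrp hm.le
    linarith
  have hx2lo : m / 2 ≤ x2 := by
    have hsub2 : Ioo r q ⊆ K2 := by
      rintro w ⟨hw1, hw2⟩
      refine ⟨⟨⟨lt_of_le_of_lt (le_trans hp1 hpr) hw1, lt_of_lt_of_le hw2 hq1⟩,
        le_of_lt (lt_of_le_of_lt (le_trans hps hpr) hw1), le_of_lt (lt_of_lt_of_le hw2 hqS)⟩,
        le_of_lt hw1⟩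
    have := toReal_mono' μ hsub2
    rw [hIccIoo] at this
    have h2' := hlow r q (le_trans hps hpr) hrq hqS
    have hA : m * (q - r) ≤ x2 := le_trans h2' this
    have hrq' : 1/2 ≤ q - r := by rw [hr]; linarith
    have hB := mul_le_mul_of_nonneg_left hrq' hm.le
    linarith
  have hx1nn : 0 ≤ x1 := ENNReal.toReal_nonneg
  have hx2nn : 0 ≤ x2 := ENNReal.toReal_nonneg
  have hDup : D ≤ 2 * M := by
    have h1' := toReal_mono' μ hKsub
    have h2' := hupp p q hpq
    have h3' : M * (q - p) ≤ M * 2 := mul_le_mul_of_nonneg_left hlen2 hM.le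
    linarith [le_trans h1' h2']
  have hDpos : 0 < D := by linarith
  have hNup : N ≤ q * D - (q - r) * x1 := by
    rw [hNadd, ← hDadd]
    have : q * (x1 + x2) - (q - r) * x1 = r * x1 + q * x2 := by ring
    linarith [hK1up, hK2up]
  have hNlo : p * D + (r - p) * x2 ≤ N := by
    rw [hNadd, ← hDadd]
    have : p * (x1 + x2) + (r - p) * x2 = p * x1 + r * x2 := by ring
    linarith [hK1lo, hK2lo]
  have hgf : gfun μ v = N / D := by
    simp only [gfun]
    rw [← hI, hN_eq, hD_eq]
  have hkapD : m / (8*M) * D ≤ m / 4 := by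
    have hkpos : 0 ≤ m / (8*M) := by positivity
    have h1' : m / (8*M) * D ≤ m / (8*M) * (2*M) :=
      mul_le_mul_of_nonneg_left hDup hkpos
    have h2' : m / (8*M) * (2*M) = m / 4 := by field_simp; ring
    linarith
  constructor
  · rw [hgf, le_div_iff₀ hDpos]
    have hrp2 : 1/2 ≤ r - p := by rw [hr]; linarith
    have e0 : m/4 ≤ (r - p) * x2 := by
      have := mul_le_mul hrp2 hx2lo (by linarith) (by linarith)
      linarith
    have e1 : p * D + m/4 ≤ N := by linarith
    have e2 : (v-1) * D ≤ p * D := mul_le_mul_of_nonneg_right hp1 hDpos.le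
    have e4 : (v - 1 + m/(8*M)) * D = (v-1) * D + m/(8*M) * D := by ring
    linarith
  · rw [hgf, div_le_iff₀ hDpos]
    have hqr2 : 1/2 ≤ q - r := by rw [hr]; linarith
    have e0 : m/4 ≤ (q - r) * x1 := by
      have := mul_le_mul hqr2 hx1lo (by linarith) (by linarith)
      linarith
    have e1 : N ≤ q * D - m/4 := by linarith
    have e2 : q * D ≤ (v+1) * D := mul_le_mul_of_nonneg_right hq1 hDpos.le
    have e4 : (v + 1 - m/(8*M)) * D = (v+1) * D - m/(8*M) * D := by ring
    linarith

lemma Dlow (μ : Measure ℝ) [IsProbabilityMeasure μ] [NullSingletonClass μ]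
    (m s S : ℝ) (hm : 0 < m) (hSs : s + 2 ≤ S)
    (hlow : ∀ a b, s ≤ a → a ≤ b → b ≤ S → m*(b-a) ≤ (μ (Icc a b)).toReal)
    {v : ℝ} (h1 : s ≤ v) (h2 : v ≤ S) :
    m ≤ (μ (Ioo (v-1) (v+1))).toReal := by
  set p := max (v-1) s with hp
  set q := min (v+1) S with hq
  have hlen : 1 ≤ q - p := len1 hSs h1 h2
  have hsub : Ioo p q ⊆ Ioo (v-1) (v+1) := by
    apply Ioo_subset_Ioo (le_max_left _ _) (min_le_left _ _)
  have h3 := toReal_mono' μ hsub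
  have h4 : (μ (Icc p q)).toReal = (μ (Ioo p q)).toReal := by
    rw [measure_congr (Ioo_ae_eq_Icc (μ := μ))]
  have h5 := hlow p q (le_max_right _ _) (by linarith) (min_le_right _ _)
  have h6 : m * 1 ≤ m * (q - p) := mul_le_mul_of_nonneg_left hlen hm.le
  linarith
  
lemma toReal_le_one (μ : Measure ℝ) [IsProbabilityMeasure μ] (t : Set ℝ) :
    (μ t).toReal ≤ 1 := by
  simpa using ENNReal.toReal_mono ENNReal.one_ne_top (prob_le_one (μ := μ) (s := t))

lemma g_local (μ : Measure ℝ) [IsProbabilityMeasure μ] [NullSingletonClass μ]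
    (m M s S : ℝ) (hm : 0 < m) (hmM : m ≤ M) (hSs : s + 2 ≤ S)
    (hcompl : μ (Icc s S)ᶜ = 0)
    (hlow : ∀ a b, s ≤ a → a ≤ b → b ≤ S → m*(b-a) ≤ (μ (Icc a b)).toReal)
    (hupp : ∀ a b, a ≤ b → (μ (Icc a b)).toReal ≤ M*(b-a))
    {u v : ℝ} (h1 : s ≤ u) (huv : u ≤ v) (h2 : v ≤ S)
    (hδ : v - u ≤ m/(16*M)) :
    (m^2/(16*M))*(v-u) ≤ gfun μ v - gfun μ u ∧
      gfun μ v - gfun μ u ≤ (6*M/m)*(v-u) := by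
  have hM : 0 < M := lt_of_lt_of_le hm hmM
  have hh0 : 0 ≤ v - u := by linarith
  have hδ1 : v - u ≤ 1 := by
    have : m/(16*M) ≤ 1 := by
      rw [div_le_one (by positivity)]; linarith
    linarith
  -- decomposition sets
  set Mid := Ioo (v-1) (u+1) with hMid
  set Bs := Ioc (u-1) (v-1) with hBs
  set Ts := Ico (u+1) (v+1) with hTs
  have hvu2 : v - 1 < u + 1 := by linarith
  have hd1 : Bs ∪ Mid = Ioo (u-1) (u+1) := Ioc_union_Ioo_eq_Ioo (by linarith) hvu2
  have hd2 : Mid ∪ Ts = Ioo (v-1) (v+1) := Ioo_union_Ico_eq_Ioo hvu2 (by linarith)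
  have hdisj1 : Disjoint Bs Mid := by
    rw [Set.disjoint_left]
    rintro w hw hw'
    exact absurd hw.2 (not_le.2 hw'.1)
  have hdisj2 : Disjoint Mid Ts := by
    rw [Set.disjoint_left]
    rintro w hw hw'
    exact absurd hw'.1 (not_le.2 hw.2)
  have hBmeas : MeasurableSet Bs := measurableSet_Ioc
  have hMmeas : MeasurableSet Mid := measurableSet_Ioo
  have hTmeas : MeasurableSet Ts := measurableSet_Ico
  -- real quantities
  set Br := (μ Bs).toReal with hBr
  set Dm := (μ Mid).toReal with hDm
  set Ar := (μ Ts).toReal with hAr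
  set Bt := ∫ w in Bs, w ∂μ with hBt
  set Nm := ∫ w in Mid, w ∂μ with hNm
  set T := ∫ w in Ts, w ∂μ with hT
  have hBr0 : 0 ≤ Br := ENNReal.toReal_nonneg
  have hDm0 : 0 ≤ Dm := ENNReal.toReal_nonneg
  have hAr0 : 0 ≤ Ar := ENNReal.toReal_nonneg
  have hBssub : Bs ⊆ Icc (u-2) (v+2) := by
    rintro w ⟨hw1, hw2⟩; exact ⟨by linarith, by linarith⟩
  have hMidsub : Mid ⊆ Icc (u-2) (v+2) := by
    rintro w ⟨hw1, hw2⟩; exact ⟨by linarith, by linarith⟩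
  have hTssub : Ts ⊆ Icc (u-2) (v+2) := by
    rintro w ⟨hw1, hw2⟩; exact ⟨by linarith, by linarith⟩
  have hintB := int_on μ (u-2) (v+2) Bs hBmeas hBssub
  have hintM := int_on μ (u-2) (v+2) Mid hMmeas hMidsub
  have hintT := int_on μ (u-2) (v+2) Ts hTmeas hTssub
  -- decompositions of D and N
  have hD1 : (μ (Ioo (u-1) (u+1))).toReal = Br + Dm := by
    rw [← hd1, measure_union hdisj1 hMmeas,
      ENNReal.toReal_add (measure_ne_top μ _) (measure_ne_top μ _)]
  have hD2 : (μ (Ioo (v-1) (v+1))).toReal = Dm + Ar := by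
    rw [← hd2, measure_union hdisj2 hTmeas,
      ENNReal.toReal_add (measure_ne_top μ _) (measure_ne_top μ _)]
  have hN1 : (∫ w in Ioo (u-1) (u+1), w ∂μ) = Bt + Nm := by
    rw [← hd1]; exact setIntegral_union hdisj1 hMmeas hintB hintM
  have hN2 : (∫ w in Ioo (v-1) (v+1), w ∂μ) = Nm + T := by
    rw [← hd2]; exact setIntegral_union hdisj2 hTmeas hintM hintT
  -- positivity of denominators
  have hD1low : m ≤ Br + Dm := by
    rw [← hD1]; exact Dlow μ m s S hm hSs hlow h1 (le_trans huv h2)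
  have hD2low : m ≤ Dm + Ar := by
    rw [← hD2]; exact Dlow μ m s S hm hSs hlow (le_trans h1 huv) h2
  have hD2up : Dm + Ar ≤ 1 := by rw [← hD2]; exact toReal_le_one μ _
  have hD1pos : (0:ℝ) < Br + Dm := lt_of_lt_of_le hm hD1low
  have hD2pos : (0:ℝ) < Dm + Ar := lt_of_lt_of_le hm hD2low
  -- g values
  have hg1 : gfun μ u = (Bt + Nm) / (Br + Dm) := by
    simp only [gfun]; rw [hN1, hD1]
  have hg2 : gfun μ v = (Nm + T) / (Dm + Ar) := by
    simp only [gfun]; rw [hN2, hD2]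
  set g1 := (Bt + Nm) / (Br + Dm) with hg1d
  -- bounds on g1 from gmean
  have hgm := gmean μ m M s S hm hmM hSs hcompl hlow hupp h1 (le_trans huv h2)
  rw [hg1] at hgm
  have hκpos : 0 < m/(8*M) := by positivity
  have hg1lo : u - 1 + m/(8*M) ≤ g1 := hgm.1
  have hg1up : g1 ≤ u + 1 - m/(8*M) := hgm.2
  -- integral bounds
  have hconst : ∀ (t : Set ℝ) (c : ℝ), ∫ _ in t, c ∂μ = (μ t).toReal * c := by
    intro t c; rw [setIntegral_const, smul_eq_mul, measureReal_def]
  have hTlo : (u+1) * Ar ≤ T := by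
    rw [hT, show (u+1) * Ar = (μ Ts).toReal * (u+1) by rw [hAr]; ring, ← hconst]
    exact setIntegral_mono_on (integrableOn_const)
      hintT hTmeas (fun w hw => hw.1)
  have hTup : T ≤ (v+1) * Ar := by
    rw [hT, show (v+1) * Ar = (μ Ts).toReal * (v+1) by rw [hAr]; ring, ← hconst]
    exact setIntegral_mono_on hintT (integrableOn_const)
      hTmeas (fun w hw => hw.2.le)
  have hBtlo : (u-1) * Br ≤ Bt := by
    rw [hBt, show (u-1) * Br = (μ Bs).toReal * (u-1) by rw [hBr]; ring, ← hconst]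
    exact setIntegral_mono_on (integrableOn_const)
      hintB hBmeas (fun w hw => hw.1.le)
  have hBtup : Bt ≤ (v-1) * Br := by
    rw [hBt, show (v-1) * Br = (μ Bs).toReal * (v-1) by rw [hBr]; ring, ← hconst]
    exact setIntegral_mono_on hintB (integrableOn_const)
      hBmeas (fun w hw => hw.2)
  -- measure upper bounds
  have hIcoIcc : ∀ a b : ℝ, (μ (Ico a b)).toReal = (μ (Icc a b)).toReal := by
    intro a b; rw [measure_congr (Ico_ae_eq_Icc (μ := μ))]
  have hIocIcc : ∀ a b : ℝ, (μ (Ioc a b)).toReal = (μ (Icc a b)).toReal := by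
    intro a b; rw [measure_congr (Ioc_ae_eq_Icc (μ := μ))]
  have hIooIcc : ∀ a b : ℝ, (μ (Ioo a b)).toReal = (μ (Icc a b)).toReal := by
    intro a b; rw [measure_congr (Ioo_ae_eq_Icc (μ := μ))]
  have hArup : Ar ≤ M * (v-u) := by
    rw [hAr, hTs, hIcoIcc]
    have := hupp (u+1) (v+1) (by linarith)
    calc (μ (Icc (u+1) (v+1))).toReal ≤ M * ((v+1) - (u+1)) := this
    _ = M * (v-u) := by ring
  have hBrup : Br ≤ M * (v-u) := by
    rw [hBr, hBs, hIocIcc]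
    have := hupp (u-1) (v-1) (by linarith)
    calc (μ (Icc (u-1) (v-1))).toReal ≤ M * ((v-1) - (u-1)) := this
    _ = M * (v-u) := by ring
  -- lower bound on Ar + Br
  have hAB : m * (v-u) ≤ Ar + Br := by
    rcases le_or_gt (v+1) S with hc | hc
    · have hsub : Ioo (u+1) (v+1) ⊆ Ts := Ioo_subset_Ico_self
      have e1 := toReal_mono' μ hsub
      rw [hIooIcc] at e1
      have e2 := hlow (u+1) (v+1) (by linarith) (by linarith) hc
      have e3 : m * ((v+1) - (u+1)) = m * (v-u) := by ring
      linarith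
    · rcases le_or_gt s (u-1) with hc' | hc'
      · have hsub : Ioo (u-1) (v-1) ⊆ Bs := Ioo_subset_Ioc_self
        have e1 := toReal_mono' μ hsub
        rw [hIooIcc] at e1
        have e2 := hlow (u-1) (v-1) hc' (by linarith) (by linarith)
        have e3 : m * ((v-1) - (u-1)) = m * (v-u) := by ring
        linarith
      · have hu1S : u + 1 ≤ S := by linarith
        have hsv1 : s ≤ v - 1 := by linarith
        have hsubT : Ioo (u+1) S ⊆ Ts := by
          rintro w ⟨hw1, hw2⟩; exact ⟨hw1.le, by linarith⟩
        have hsubB : Ioo s (v-1) ⊆ Bs := by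
          rintro w ⟨hw1, hw2⟩; exact ⟨by linarith, hw2.le⟩
        have e1 := toReal_mono' μ hsubT
        rw [hIooIcc] at e1
        have e2 := hlow (u+1) S (by linarith) hu1S le_rfl
        have e3 := toReal_mono' μ hsubB
        rw [hIooIcc] at e3
        have e4 := hlow s (v-1) le_rfl hsv1 (by linarith)
        have e5 : m * (S - (u+1)) + m * ((v-1) - s) = m * (v-u) + m * (S - s - 2) := by
          ring
        have e6 : 0 ≤ m * (S - s - 2) := mul_nonneg hm.le (by linarith)
        linarith
  -- the key algebraic identity
  have key : gfun μ v - gfun μ u =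
      (T - g1 * Ar + (g1 * Br - Bt)) / (Dm + Ar) := by
    rw [hg1, hg2, hg1d]
    field_simp
    ring
  -- lower bound on numerator
  have hn1 : m/(8*M) * Ar ≤ T - g1 * Ar := by
    have := mul_le_mul_of_nonneg_right hg1up hAr0
    have e : (u + 1 - m/(8*M)) * Ar = (u+1) * Ar - m/(8*M) * Ar := by ring
    linarith [hTlo]
  have hn2 : (m/(8*M) - (v-u)) * Br ≤ g1 * Br - Bt := by
    have := mul_le_mul_of_nonneg_right hg1lo hBr0
    have e : (u - 1 + m/(8*M)) * Br - (v-1) * Br = (m/(8*M) - (v-u)) * Br := by ring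
    linarith [hBtup]
  have hκh : m/(16*M) ≤ m/(8*M) - (v-u) := by
    have e : m/(8*M) - m/(16*M) = m/(16*M) := by ring
    linarith
  have hnumlo : m/(16*M) * (m * (v-u)) ≤ T - g1 * Ar + (g1 * Br - Bt) := by
    have e1 : m/(16*M) * Ar ≤ m/(8*M) * Ar :=
      mul_le_mul_of_nonneg_right (by linarith) hAr0
    have e2 : m/(16*M) * Br ≤ (m/(8*M) - (v-u)) * Br :=
      mul_le_mul_of_nonneg_right hκh hBr0
    have e3 := mul_le_mul_of_nonneg_left hAB (by positivity : (0:ℝ) ≤ m/(16*M))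
    have e4 : m/(16*M) * (Ar + Br) = m/(16*M) * Ar + m/(16*M) * Br := by ring
    linarith
  have hnum0 : (0:ℝ) ≤ T - g1 * Ar + (g1 * Br - Bt) :=
    le_trans (by positivity) hnumlo
  -- upper bound on numerator
  have hnumup : T - g1 * Ar + (g1 * Br - Bt) ≤ 6 * M * (v-u) := by
    have e1 : T - g1 * Ar ≤ 3 * Ar := by
      have a1 := mul_le_mul_of_nonneg_right hg1lo hAr0
      have a2 : (v + 1 - (u - 1 + m/(8*M))) * Ar ≤ 3 * Ar := by
        apply mul_le_mul_of_nonneg_right _ hAr0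
        linarith
      have a3 : (v+1) * Ar - (u - 1 + m/(8*M)) * Ar = (v + 1 - (u - 1 + m/(8*M))) * Ar := by
        ring
      linarith [hTup]
    have e2 : g1 * Br - Bt ≤ 2 * Br := by
      have a1 := mul_le_mul_of_nonneg_right hg1up hBr0
      have a2 : (u + 1 - m/(8*M)) * Br - (u-1) * Br ≤ 2 * Br := by
        have e : (u + 1 - m/(8*M)) * Br - (u-1) * Br = (2 - m/(8*M)) * Br := by ring
        rw [e]
        exact mul_le_mul_of_nonneg_right (by linarith) hBr0
      linarith [hBtlo]
    linarith
  constructor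
  · rw [key, le_div_iff₀ hD2pos]
    have e1 : m^2/(16*M) * (v-u) * (Dm + Ar) ≤ m^2/(16*M) * (v-u) := by
      have := mul_le_of_le_one_right (by positivity : (0:ℝ) ≤ m^2/(16*M) * (v-u)) hD2up
      linarith
    have e2 : m/(16*M) * (m * (v-u)) = m^2/(16*M) * (v-u) := by ring
    linarith
  · rw [key, div_le_iff₀ hD2pos]
    have e1 : 6 * M * (v-u) = (6*M/m) * (v-u) * m := by field_simp
    have e2 : (6*M/m) * (v-u) * m ≤ (6*M/m) * (v-u) * (Dm + Ar) :=
      mul_le_mul_of_nonneg_left hD2low (by positivity)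
    linarith

lemma g_chain (μ : Measure ℝ) [IsProbabilityMeasure μ] [NullSingletonClass μ]
    (m M s S : ℝ) (hm : 0 < m) (hmM : m ≤ M) (hSs : s + 2 ≤ S)
    (hcompl : μ (Icc s S)ᶜ = 0)
    (hlow : ∀ a b, s ≤ a → a ≤ b → b ≤ S → m*(b-a) ≤ (μ (Icc a b)).toReal)
    (hupp : ∀ a b, a ≤ b → (μ (Icc a b)).toReal ≤ M*(b-a)) :
    ∀ n : ℕ, ∀ u v : ℝ, s ≤ u → u ≤ v → v ≤ S → v - u ≤ n * (m/(16*M)) →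
      (m^2/(16*M))*(v-u) ≤ gfun μ v - gfun μ u ∧
        gfun μ v - gfun μ u ≤ (6*M/m)*(v-u) := by
  have hM : 0 < M := lt_of_lt_of_le hm hmM
  intro n
  induction n with
  | zero =>
    intro u v h1 huv h2 hn
    have hvu : v = u := by
      simp only [Nat.cast_zero, zero_mul] at hn
      linarith
    subst hvu
    simp
  | succ n ih =>
    intro u v h1 huv h2 hn
    rcases le_or_gt (v - u) (m/(16*M)) with hc | hc
    · exact g_local μ m M s S hm hmM hSs hcompl hlow hupp h1 huv h2 hc
    · set w := u + m/(16*M) with hw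
      have hδpos : (0:ℝ) < m/(16*M) := by positivity
      have hw1 : u ≤ w := by rw [hw]; linarith
      have hw2 : w ≤ v := by rw [hw]; linarith
      have ha := g_local μ m M s S hm hmM hSs hcompl hlow hupp h1 hw1
        (le_trans hw2 h2) (by rw [hw]; ring_nf; linarith [le_refl (m/(16*M))])
      have hb := ih w v (le_trans h1 hw1) hw2 h2 (by
        push_cast at hn ⊢
        rw [hw]; linarith)
      have e1 : (m^2/(16*M))*(v-u) = (m^2/(16*M))*(w-u) + (m^2/(16*M))*(v-w) := by
        ring
      have e2 : (6*M/m)*(v-u) = (6*M/m)*(w-u) + (6*M/m)*(v-w) := by ring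
      constructor
      · linarith [ha.1, hb.1]
      · linarith [ha.2, hb.2]

lemma g_est (μ : Measure ℝ) [IsProbabilityMeasure μ] [NullSingletonClass μ]
    (m M s S : ℝ) (hm : 0 < m) (hmM : m ≤ M) (hSs : s + 2 ≤ S)
    (hcompl : μ (Icc s S)ᶜ = 0)
    (hlow : ∀ a b, s ≤ a → a ≤ b → b ≤ S → m*(b-a) ≤ (μ (Icc a b)).toReal)
    (hupp : ∀ a b, a ≤ b → (μ (Icc a b)).toReal ≤ M*(b-a))
    {u v : ℝ} (h1 : s ≤ u) (huv : u ≤ v) (h2 : v ≤ S) :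
    (m^2/(16*M))*(v-u) ≤ gfun μ v - gfun μ u ∧
      gfun μ v - gfun μ u ≤ (6*M/m)*(v-u) := by
  have hM : 0 < M := lt_of_lt_of_le hm hmM
  have hδpos : (0:ℝ) < m/(16*M) := by positivity
  set n := ⌈(v-u)/(m/(16*M))⌉₊ with hn
  have h3 : (v-u)/(m/(16*M)) ≤ n := Nat.le_ceil _
  have h4 : v - u ≤ n * (m/(16*M)) := by
    rw [div_le_iff₀ hδpos] at h3
    linarith
  exact g_chain μ m M s S hm hmM hSs hcompl hlow hupp n u v h1 huv h2 h4

end KrauseAux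

open MeasureTheory

/-- A regular opinion function: the density of agents on every subinterval of
`[inf x, sup x]` (extrema over `[0,1]`) is bounded above and below by positive
constants `M ≥ m > 0`. -/
def RegularOpinion (x : ℝ → ℝ) : Prop :=
  ∃ m M : ℝ, 0 < m ∧ m ≤ M ∧ ∀ a b : ℝ,
    sInf (x '' Set.Icc (0 : ℝ) 1) ≤ a → a ≤ b →
    b ≤ sSup (x '' Set.Icc (0 : ℝ) 1) →
    m * (b - a) ≤ (volume {α ∈ Set.Icc (0 : ℝ) 1 | x α ∈ Set.Icc a b}).toReal ∧
    (volume {α ∈ Set.Icc (0 : ℝ) 1 | x α ∈ Set.Icc a b}).toReal ≤ M * (b - a)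

/-- If `x ∈ X_L` is regular and `sup x − inf x > 2`, then `U(x)`
is regular. -/
theorem regular_preserved (L : ℝ) (hL : 0 < L) (x : ℝ → ℝ) (hx : Measurable x)
    (hrange : ∀ α ∈ Set.Icc (0 : ℝ) 1, x α ∈ Set.Icc (0 : ℝ) L)
    (hreg : RegularOpinion x)
    (hspread :
      2 < sSup (x '' Set.Icc (0 : ℝ) 1) - sInf (x '' Set.Icc (0 : ℝ) 1)) :
    RegularOpinion (Uop x) := by
  classical
  open Set KrauseAux in
  obtain ⟨m, M, hm, hmM, hbnd⟩ := hreg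
  have hM : 0 < M := lt_of_lt_of_le hm hmM
  set s := sInf (x '' Set.Icc (0:ℝ) 1) with hsdef
  set S := sSup (x '' Set.Icc (0:ℝ) 1) with hSdef
  have hsS : s + 2 ≤ S := by linarith
  have hne : (x '' Set.Icc (0:ℝ) 1).Nonempty :=
    ⟨x 0, 0, by norm_num, rfl⟩
  have hbddA : BddAbove (x '' Set.Icc (0:ℝ) 1) :=
    ⟨L, by rintro _ ⟨α, hα, rfl⟩; exact (hrange α hα).2⟩
  have hbddB : BddBelow (x '' Set.Icc (0:ℝ) 1) :=
    ⟨0, by rintro _ ⟨α, hα, rfl⟩; exact (hrange α hα).1⟩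
  have hxmem : ∀ α ∈ Set.Icc (0:ℝ) 1, x α ∈ Set.Icc s S := fun α hα =>
    ⟨csInf_le hbddB ⟨α, hα, rfl⟩, le_csSup hbddA ⟨α, hα, rfl⟩⟩
  -- the pushforward measure
  set μ := Measure.map x (volume.restrict (Set.Icc (0:ℝ) 1)) with hμdef
  haveI hprob : IsProbabilityMeasure μ := by
    constructor
    rw [hμdef, Measure.map_apply hx MeasurableSet.univ]
    simp [Real.volume_Icc]
  have hbridge : ∀ t : Set ℝ, MeasurableSet t →
      μ t = volume {α ∈ Set.Icc (0:ℝ) 1 | x α ∈ t} := by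
    intro t ht
    rw [hμdef, Measure.map_apply hx ht, Measure.restrict_apply (hx ht)]
    congr 1
    ext α
    simp only [Set.mem_inter_iff, Set.mem_preimage, Set.mem_sep_iff]
    tauto
  haveI hatom : NullSingletonClass μ := by
    constructor
    intro v
    have hb := hbridge {v} (measurableSet_singleton v)
    rcases le_or_gt s v with h1 | h1
    · rcases le_or_gt v S with h2 | h2
      · have h3 := (hbnd v v h1 le_rfl h2).2
        have h4 : Set.Icc v v = {v} := Set.Icc_self v
        rw [h4] at h3
        rw [hb]
        have h5 : (volume {α ∈ Set.Icc (0:ℝ) 1 | x α ∈ ({v} : Set ℝ)}).toReal = 0 := by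
          have := ENNReal.toReal_nonneg
            (a := volume {α ∈ Set.Icc (0:ℝ) 1 | x α ∈ ({v} : Set ℝ)})
          linarith [h3]
        have h6 : volume {α ∈ Set.Icc (0:ℝ) 1 | x α ∈ ({v} : Set ℝ)} ≠ ⊤ := by
          apply ne_top_of_le_ne_top (by simp : volume (Set.Icc (0:ℝ) 1) ≠ ⊤)
          exact measure_mono (fun α hα => hα.1)
        exact (ENNReal.toReal_eq_zero_iff _).1 h5 |>.resolve_right h6
      · have hempty : {α ∈ Set.Icc (0:ℝ) 1 | x α ∈ ({v} : Set ℝ)} = ∅ := by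
          ext α
          simp only [Set.mem_sep_iff, Set.mem_singleton_iff, Set.mem_empty_iff_false,
            iff_false, not_and]
          intro hα hxv
          have := (hxmem α hα).2
          rw [hxv] at this
          linarith
        rw [hb, hempty, measure_empty]
    · have hempty : {α ∈ Set.Icc (0:ℝ) 1 | x α ∈ ({v} : Set ℝ)} = ∅ := by
        ext α
        simp only [Set.mem_sep_iff, Set.mem_singleton_iff, Set.mem_empty_iff_false,
          iff_false, not_and]
        intro hα hxv
        have := (hxmem α hα).1
        rw [hxv] at this
        linarith
      rw [hb, hempty, measure_empty]
  -- regularity transferred to μ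
  have hlow : ∀ a b, s ≤ a → a ≤ b → b ≤ S → m*(b-a) ≤ (μ (Set.Icc a b)).toReal := by
    intro a b h1 h2 h3
    rw [hbridge _ measurableSet_Icc]
    exact (hbnd a b h1 h2 h3).1
  have huppSS : ∀ a b, s ≤ a → a ≤ b → b ≤ S → (μ (Set.Icc a b)).toReal ≤ M*(b-a) := by
    intro a b h1 h2 h3
    rw [hbridge _ measurableSet_Icc]
    exact (hbnd a b h1 h2 h3).2
  have hcompl : μ (Set.Icc s S)ᶜ = 0 := by
    have hempty : {α ∈ Set.Icc (0:ℝ) 1 | x α ∈ (Set.Icc s S)ᶜ} = ∅ := by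
      ext α
      simp only [Set.mem_sep_iff, Set.mem_compl_iff, Set.mem_empty_iff_false, iff_false,
        not_and]
      intro hα hc
      exact hc (hxmem α hα)
    rw [hbridge _ measurableSet_Icc.compl, hempty, measure_empty]
  have hupp : ∀ a b, a ≤ b → (μ (Set.Icc a b)).toReal ≤ M*(b-a) := by
    intro a b hab
    have e0 : μ (Set.Icc a b) = μ (Set.Icc a b ∩ Set.Icc s S) := by
      have h7 := measure_inter_add_diff (μ := μ) (t := Set.Icc s S) (Set.Icc a b)
        measurableSet_Icc
      have h8 : μ (Set.Icc a b \ Set.Icc s S) = 0 :=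
        measure_mono_null (fun w hw => hw.2) hcompl
      rw [← h7, h8, add_zero]
    rw [e0, Set.Icc_inter_Icc]
    rcases le_or_gt (a ⊔ s) (b ⊓ S) with hc | hc
    · have h9 := huppSS (a ⊔ s) (b ⊓ S) le_sup_right hc inf_le_right
      have h10 : M * (b ⊓ S - a ⊔ s) ≤ M * (b - a) := by
        apply mul_le_mul_of_nonneg_left _ hM.le
        have := inf_le_left (a := b) (b := S)
        have := le_sup_left (a := a) (b := s)
        linarith
      linarith
    · rw [Set.Icc_eq_empty (not_le.2 hc)]
      simp only [measure_empty, ENNReal.toReal_zero]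
      exact mul_nonneg hM.le (by linarith)
  have hm12 : 2 * m ≤ 1 := by
    have h11 := hlow s S (le_refl s) (by linarith) (le_refl S)
    have h12 := toReal_le_one μ (Set.Icc s S)
    nlinarith
  -- identification of Uop with the window mean of μ
  have hvol : ∀ α : ℝ, volume {β ∈ Set.Icc (0:ℝ) 1 | |x α - x β| < 1} =
      μ (Set.Ioo (x α - 1) (x α + 1)) := by
    intro α
    rw [hbridge _ measurableSet_Ioo]
    congr 1
    ext β
    simp only [Set.mem_sep_iff, Set.mem_Ioo]
    constructor
    · rintro ⟨hβ, habs⟩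
      rw [abs_lt] at habs
      exact ⟨hβ, by linarith [habs.1, habs.2], by linarith [habs.1, habs.2]⟩
    · rintro ⟨hβ, h1, h2⟩
      exact ⟨hβ, by rw [abs_lt]; constructor <;> linarith⟩
  have hnum : ∀ α : ℝ, (∫ β in {β ∈ Set.Icc (0:ℝ) 1 | |x α - x β| < 1}, x β) =
      ∫ w in Set.Ioo (x α - 1) (x α + 1), w ∂μ := by
    intro α
    have hseteq : {β ∈ Set.Icc (0:ℝ) 1 | |x α - x β| < 1} =
        x ⁻¹' (Set.Ioo (x α - 1) (x α + 1)) ∩ Set.Icc (0:ℝ) 1 := by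
      ext β
      simp only [Set.mem_sep_iff, Set.mem_inter_iff, Set.mem_preimage, Set.mem_Ioo]
      constructor
      · rintro ⟨hβ, habs⟩
        rw [abs_lt] at habs
        exact ⟨⟨by linarith [habs.1, habs.2], by linarith [habs.1, habs.2]⟩, hβ⟩
      · rintro ⟨⟨h1, h2⟩, hβ⟩
        exact ⟨hβ, by rw [abs_lt]; constructor <;> linarith⟩
    rw [hseteq, ← Measure.restrict_restrict (hx measurableSet_Ioo)]
    exact (setIntegral_map (f := fun w : ℝ => w) measurableSet_Ioo
      measurable_id.aestronglyMeasurable hx.aemeasurable).symm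
  have hUeq : ∀ α ∈ Set.Icc (0:ℝ) 1, Uop x α = gfun μ (x α) := by
    intro α hα
    have hD := Dlow μ m s S hm hsS hlow (hxmem α hα).1 (hxmem α hα).2
    have hne0 : ¬ (μ (Set.Ioo (x α - 1) (x α + 1)) = 0) := by
      intro h0
      rw [h0] at hD
      simp at hD
      linarith
    simp only [Uop, hvol α, hnum α, if_neg hne0]
    rfl
  -- the global estimate
  have hest : ∀ {u v : ℝ}, s ≤ u → u ≤ v → v ≤ S →
      (m^2/(16*M))*(v-u) ≤ gfun μ v - gfun μ u ∧
        gfun μ v - gfun μ u ≤ (6*M/m)*(v-u) :=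
    fun {u v} h1 h2 h3 => g_est μ m M s S hm hmM hsS hcompl hlow hupp h1 h2 h3
  -- image of Uop
  have himg : Uop x '' Set.Icc (0:ℝ) 1 = gfun μ '' (x '' Set.Icc (0:ℝ) 1) := by
    rw [← Set.image_comp]
    exact Set.image_congr hUeq
  have himgne : (Uop x '' Set.Icc (0:ℝ) 1).Nonempty :=
    ⟨Uop x 0, 0, by norm_num, rfl⟩
  have hbnds : ∀ y ∈ Uop x '' Set.Icc (0:ℝ) 1, gfun μ s ≤ y ∧ y ≤ gfun μ S := by
    intro y hy
    rw [himg] at hy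
    obtain ⟨t, ht, rfl⟩ := hy
    obtain ⟨α, hα, rfl⟩ := ht
    have htm := hxmem α hα
    have h1 := (hest (le_refl s) htm.1 htm.2).1
    have h2 := (hest htm.1 htm.2 (le_refl S)).1
    have c1 : 0 ≤ (m^2/(16*M))*(x α - s) := mul_nonneg (by positivity) (by linarith [htm.1])
    have c2 : 0 ≤ (m^2/(16*M))*(S - x α) := mul_nonneg (by positivity) (by linarith [htm.2])
    constructor <;> linarith
  have hsinf : gfun μ s ≤ sInf (Uop x '' Set.Icc (0:ℝ) 1) :=
    le_csInf himgne (fun y hy => (hbnds y hy).1)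
  have hssup : sSup (Uop x '' Set.Icc (0:ℝ) 1) ≤ gfun μ S :=
    csSup_le himgne (fun y hy => (hbnds y hy).2)
  -- continuity of gfun on [s, S]
  have hcont : ContinuousOn (gfun μ) (Set.Icc s S) := by
    have hlip : LipschitzOnWith (Real.toNNReal (6*M/m)) (gfun μ) (Set.Icc s S) := by
      apply LipschitzOnWith.of_dist_le'
      intro p hp q hq
      rw [Real.dist_eq, Real.dist_eq]
      rcases le_total p q with hpq | hpq
      · have h1 := hest hp.1 hpq hq.2
        have h2 : 0 ≤ gfun μ q - gfun μ p := by
          have := mul_nonneg (by positivity : (0:ℝ) ≤ m^2/(16*M)) (by linarith : (0:ℝ) ≤ q - p)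
          linarith [h1.1]
        rw [abs_of_nonpos (by linarith), abs_of_nonpos (by linarith)]
        linarith [h1.2]
      · have h1 := hest hq.1 hpq hp.2
        have h2 : 0 ≤ gfun μ p - gfun μ q := by
          have := mul_nonneg (by positivity : (0:ℝ) ≤ m^2/(16*M)) (by linarith : (0:ℝ) ≤ p - q)
          linarith [h1.1]
        rw [abs_of_nonneg (by linarith), abs_of_nonneg (by linarith)]
        linarith [h1.2]
    exact hlip.continuousOn
  -- the new constants
  refine ⟨m^2/(6*M), 16*M^2/m^2, by positivity, ?_, ?_⟩
  · rw [div_le_div_iff₀ (by positivity) (by positivity)]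
    nlinarith [pow_le_pow_left₀ hm.le hmM 3, sq_nonneg m, sq_nonneg M]
  · intro a b ha hab hb
    have has : gfun μ s ≤ a := le_trans hsinf ha
    have hbS : b ≤ gfun μ S := le_trans hb hssup
    obtain ⟨a', ha'mem, ha'⟩ : a ∈ gfun μ '' Set.Icc s S :=
      intermediate_value_Icc (by linarith : s ≤ S) hcont ⟨has, le_trans hab hbS⟩
    obtain ⟨b', hb'mem, hb'⟩ : b ∈ gfun μ '' Set.Icc s S :=
      intermediate_value_Icc (by linarith : s ≤ S) hcont ⟨le_trans has hab, hbS⟩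
    have ha'b' : a' ≤ b' := by
      by_contra hcon
      push_neg at hcon
      have h1 := (hest hb'mem.1 hcon.le ha'mem.2).1
      have h2 : 0 < (m^2/(16*M))*(a'-b') :=
        mul_pos (by positivity) (by linarith)
      rw [ha', hb'] at h1
      linarith
    have hseteq : {α ∈ Set.Icc (0:ℝ) 1 | Uop x α ∈ Set.Icc a b} =
        {α ∈ Set.Icc (0:ℝ) 1 | x α ∈ Set.Icc a' b'} := by
      ext α
      simp only [Set.mem_sep_iff, Set.mem_Icc]
      constructor
      · rintro ⟨hα, h5, h6⟩
        rw [hUeq α hα] at h5 h6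
        have hxα := hxmem α hα
        refine ⟨hα, ?_, ?_⟩
        · by_contra hcon
          push_neg at hcon
          have h7 := (hest hxα.1 hcon.le ha'mem.2).1
          have h8 : 0 < (m^2/(16*M))*(a' - x α) :=
            mul_pos (by positivity) (by linarith)
          rw [ha'] at h7
          linarith
        · by_contra hcon
          push_neg at hcon
          have h7 := (hest hb'mem.1 hcon.le hxα.2).1
          have h8 : 0 < (m^2/(16*M))*(x α - b') :=
            mul_pos (by positivity) (by linarith)
          rw [hb'] at h7
          linarith
      · rintro ⟨hα, h5, h6⟩
        have hxα := hxmem α hα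
        refine ⟨hα, ?_, ?_⟩ <;> rw [hUeq α hα]
        · have h7 := (hest ha'mem.1 h5 hxα.2).1
          have h8 : 0 ≤ (m^2/(16*M))*(x α - a') :=
            mul_nonneg (by positivity) (by linarith)
          rw [ha'] at h7
          linarith
        · have h7 := (hest hxα.1 h6 hb'mem.2).1
          have h8 : 0 ≤ (m^2/(16*M))*(b' - x α) :=
            mul_nonneg (by positivity) (by linarith)
          rw [hb'] at h7
          linarith
    rw [hseteq]
    have hbound := hbnd a' b' ha'mem.1 ha'b' hb'mem.2
    have hba := hest ha'mem.1 ha'b' hb'mem.2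
    rw [ha', hb'] at hba
    constructor
    · have e1 : m^2/(6*M) * (b-a) ≤ m^2/(6*M) * ((6*M/m)*(b'-a')) :=
        mul_le_mul_of_nonneg_left hba.2 (by positivity)
      have e2 : m^2/(6*M) * ((6*M/m)*(b'-a')) = m * (b'-a') := by
        field_simp
      linarith [hbound.1]
    · have e1 : 16*M^2/m^2 * ((m^2/(16*M))*(b'-a')) ≤ 16*M^2/m^2 * (b-a) :=
        mul_le_mul_of_nonneg_left hba.1 (by positivity)
      have e2 : 16*M^2/m^2 * ((m^2/(16*M))*(b'-a')) = M * (b'-a') := by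
        field_simp
      linarith [hbound.2]
end

section
/- Let L > 0 and let x ∈ X_L be a regular opinion function. Then the one-step update operator U of the continuous-agent Krause model is continuous at x with respect to the supremum norm: for every ε > 0 there exists δ > 0 such that for every y ∈ X_L with sup_α |y(α) − x(α)| ≤ δ, one has sup_α |(U(y))(α) − (U(x))(α)| ≤ ε. -/
open MeasureTheory Set

private lemma vol_ne_top' {S : Set ℝ} (h : S ⊆ Set.Icc (0:ℝ) 1) : volume S ≠ ⊤ :=
  ne_top_of_le_ne_top (by simp [Real.volume_Icc]) (measure_mono h)

private lemma tv_mono' {S T : Set ℝ} (hT : T ⊆ Set.Icc (0:ℝ) 1) (h : S ⊆ T) :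
    (volume S).toReal ≤ (volume T).toReal :=
  ENNReal.toReal_mono (vol_ne_top' hT) (measure_mono h)

set_option maxHeartbeats 1000000 in
/-- The update operator `U` of the continuous-agent Krause model
is continuous, with respect to the supremum norm on `[0,1]`, at every regular
`x ∈ X_L`. -/
theorem update_continuous_at_regular (L : ℝ) (hL : 0 < L) (x : ℝ → ℝ)
    (hx : Measurable x)
    (hxrange : ∀ α ∈ Set.Icc (0 : ℝ) 1, x α ∈ Set.Icc (0 : ℝ) L)
    (hreg : RegularOpinion x) :
    ∀ ε > (0 : ℝ), ∃ δ > (0 : ℝ), ∀ y : ℝ → ℝ, Measurable y →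
      (∀ α ∈ Set.Icc (0 : ℝ) 1, y α ∈ Set.Icc (0 : ℝ) L) →
      (∀ α ∈ Set.Icc (0 : ℝ) 1, |y α - x α| ≤ δ) →
      ∀ α ∈ Set.Icc (0 : ℝ) 1, |Uop y α - Uop x α| ≤ ε := by
  obtain ⟨m, M, hm, hmM, hregmM⟩ := hreg
  set I : Set ℝ := Set.Icc (0:ℝ) 1 with hI
  set A : ℝ := sInf (x '' I) with hA
  set B : ℝ := sSup (x '' I) with hB
  have hMpos : 0 < M := lt_of_lt_of_le hm hmM
  have hAB : ∀ α ∈ I, A ≤ x α ∧ x α ≤ B := by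
    have hbdd : BddAbove (x '' I) ∧ BddBelow (x '' I) := by
      constructor
      · exact ⟨L, fun v ⟨α, hα, hv⟩ => hv ▸ (hxrange α hα).2⟩
      · exact ⟨0, fun v ⟨α, hα, hv⟩ => hv ▸ (hxrange α hα).1⟩
    intro α hα
    exact ⟨csInf_le hbdd.2 ⟨α, hα, rfl⟩, le_csSup hbdd.1 ⟨α, hα, rfl⟩⟩
  have hupper : ∀ a b : ℝ, a ≤ b →
      (volume (I ∩ x ⁻¹' Set.Icc a b)).toReal ≤ M * (b - a) := by
    intro a b hab
    rcases le_or_gt (max a A) (min b B) with h | h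
    · have hset : I ∩ x ⁻¹' Set.Icc a b = I ∩ x ⁻¹' Set.Icc (max a A) (min b B) := by
        ext β
        simp only [Set.mem_inter_iff, Set.mem_preimage, Set.mem_Icc]
        constructor
        · rintro ⟨hβ, h1, h2⟩
          exact ⟨hβ, max_le h1 (hAB β hβ).1, le_min h2 (hAB β hβ).2⟩
        · rintro ⟨hβ, h1, h2⟩
          exact ⟨hβ, le_trans (le_max_left _ _) h1, le_trans h2 (min_le_left _ _)⟩
      rw [hset]
      have h2 := (hregmM (max a A) (min b B) (le_max_right _ _) h (min_le_right _ _)).2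
      refine le_trans h2 ?_
      have h3 : min b B - max a A ≤ b - a := sub_le_sub (min_le_left _ _) (le_max_left _ _)
      nlinarith
    · have hset : I ∩ x ⁻¹' Set.Icc a b = ∅ := by
        ext β
        simp only [Set.mem_inter_iff, Set.mem_preimage, Set.mem_Icc,
          Set.mem_empty_iff_false, iff_false, not_and]
        intro hβ h1 h2
        have h3 := max_le h1 (hAB β hβ).1
        have h4 := le_min h2 (hAB β hβ).2
        linarith
      rw [hset]
      have : (volume (∅ : Set ℝ)).toReal = 0 := by simp
      rw [this]
      nlinarith
  set c : ℝ := min 1 (m/2) with hc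
  have hcpos : 0 < c := lt_min one_pos (by linarith)
  have hhalf : ∀ α ∈ I, c ≤
      (volume (I ∩ x ⁻¹' Set.Icc (x α - 1/2) (x α + 1/2))).toReal := by
    intro α hα
    obtain ⟨hAx, hxB⟩ := hAB α hα
    rcases le_or_gt (B - A) (1/2) with hBA | hBA
    · have hset : I ∩ x ⁻¹' Set.Icc (x α - 1/2) (x α + 1/2) = I := by
        apply Set.inter_eq_left.mpr
        intro β hβ
        obtain ⟨h1, h2⟩ := hAB β hβ
        simp only [Set.mem_preimage, Set.mem_Icc]
        constructor <;> linarith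
      rw [hset]
      have hv1 : (volume I).toReal = 1 := by rw [hI]; simp [Real.volume_Icc]
      rw [hv1]
      exact min_le_left _ _
    · set a' := max A (x α - 1/2) with ha'
      set b' := min B (x α + 1/2) with hb'
      have ha'x : a' ≤ x α := max_le hAx (by linarith)
      have hxb' : x α ≤ b' := le_min hxB (by linarith)
      have hlen : 1/2 ≤ b' - a' := by
        rcases le_total (x α + 1/2) B with h1 | h1
        · have hb'' : b' = x α + 1/2 := min_eq_right h1
          rw [hb'']; linarith
        · have hb'' : b' = B := min_eq_left h1
          rcases le_total A (x α - 1/2) with h2 | h2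
          · have ha'' : a' = x α - 1/2 := max_eq_right h2
            rw [hb'', ha'']; linarith
          · have ha'' : a' = A := max_eq_left h2
            rw [hb'', ha'']; linarith
      have hsub : I ∩ x ⁻¹' Set.Icc a' b' ⊆ I ∩ x ⁻¹' Set.Icc (x α - 1/2) (x α + 1/2) := by
        rintro β ⟨hβ, hmem⟩
        simp only [Set.mem_preimage, Set.mem_Icc] at hmem
        refine ⟨hβ, ?_⟩
        simp only [Set.mem_preimage, Set.mem_Icc]
        exact ⟨le_trans (le_max_right A (x α - 1/2)) hmem.1,
          le_trans hmem.2 (min_le_right B (x α + 1/2))⟩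
      have hreg' := (hregmM a' b' (le_max_left _ _) (ha'x.trans hxb') (min_le_left _ _)).1
      calc c ≤ m * (b' - a') := le_trans (min_le_right _ _) (by nlinarith)
        _ ≤ (volume (I ∩ x ⁻¹' Set.Icc a' b')).toReal := hreg'
        _ ≤ _ := tv_mono' Set.inter_subset_left hsub
  intro ε hε
  set K : ℝ := 1 + 16 * M * L with hK
  have hKpos : 0 < K := by positivity
  refine ⟨min (1/8) (ε * c^2 / K), lt_min (by norm_num) (by positivity), ?_⟩
  set δ : ℝ := min (1/8) (ε * c^2 / K) with hδdef
  have hδpos : 0 < δ := lt_min (by norm_num) (by positivity)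
  have hδ8 : δ ≤ 1/8 := min_le_left _ _
  intro y hy hyrange hyδ α hα
  -- the six sets
  set Sx : Set ℝ := I ∩ x ⁻¹' Set.Ioo (x α - 1) (x α + 1) with hSxdef
  set Sy : Set ℝ := I ∩ y ⁻¹' Set.Ioo (y α - 1) (y α + 1) with hSydef
  set Tlo : Set ℝ := I ∩ x ⁻¹' Set.Ioo (x α - (1 - 2*δ)) (x α + (1 - 2*δ)) with hTlodef
  set Thi : Set ℝ := I ∩ x ⁻¹' Set.Ioo (x α - (1 + 2*δ)) (x α + (1 + 2*δ)) with hThidef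
  set U1 : Set ℝ := I ∩ x ⁻¹' Set.Icc (x α - 1 - 2*δ) (x α - 1 + 2*δ) with hU1def
  set U2 : Set ℝ := I ∩ x ⁻¹' Set.Icc (x α + 1 - 2*δ) (x α + 1 + 2*δ) with hU2def
  have hSxI : Sx ⊆ I := Set.inter_subset_left
  have hSyI : Sy ⊆ I := Set.inter_subset_left
  have hTloI : Tlo ⊆ I := Set.inter_subset_left
  have hThiI : Thi ⊆ I := Set.inter_subset_left
  have hU1I : U1 ⊆ I := Set.inter_subset_left
  have hU2I : U2 ⊆ I := Set.inter_subset_left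
  have hmI : MeasurableSet I := by rw [hI]; exact measurableSet_Icc
  have hmSx : MeasurableSet Sx := hmI.inter (hx measurableSet_Ioo)
  have hmSy : MeasurableSet Sy := hmI.inter (hy measurableSet_Ioo)
  have hmTlo : MeasurableSet Tlo := hmI.inter (hx measurableSet_Ioo)
  have hmThi : MeasurableSet Thi := hmI.inter (hx measurableSet_Ioo)
  have hIvol : (volume I).toReal = 1 := by rw [hI]; simp [Real.volume_Icc]
  have hvle1 : ∀ S : Set ℝ, S ⊆ I → (volume S).toReal ≤ 1 := fun S hS =>
    hIvol ▸ tv_mono' (by rw [hI]) hS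
  -- subset relations
  have habsy : ∀ β ∈ I, -δ ≤ y β - x β ∧ y β - x β ≤ δ := fun β hβ => abs_le.mp (hyδ β hβ)
  obtain ⟨hyα1, hyα2⟩ := habsy α hα
  have hTloSy : Tlo ⊆ Sy := by
    rintro β ⟨hβ, hmem⟩
    simp only [Set.mem_preimage, Set.mem_Ioo] at hmem
    obtain ⟨hb1, hb2⟩ := habsy β hβ
    refine ⟨hβ, ?_⟩
    simp only [Set.mem_preimage, Set.mem_Ioo]
    constructor <;> linarith [hmem.1, hmem.2]
  have hSyThi : Sy ⊆ Thi := by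
    rintro β ⟨hβ, hmem⟩
    simp only [Set.mem_preimage, Set.mem_Ioo] at hmem
    obtain ⟨hb1, hb2⟩ := habsy β hβ
    refine ⟨hβ, ?_⟩
    simp only [Set.mem_preimage, Set.mem_Ioo]
    constructor <;> linarith [hmem.1, hmem.2]
  have hTloSx : Tlo ⊆ Sx := by
    rintro β ⟨hβ, hmem⟩
    simp only [Set.mem_preimage, Set.mem_Ioo] at hmem
    refine ⟨hβ, ?_⟩
    simp only [Set.mem_preimage, Set.mem_Ioo]
    constructor <;> linarith [hmem.1, hmem.2]
  have hSxThi : Sx ⊆ Thi := by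
    rintro β ⟨hβ, hmem⟩
    simp only [Set.mem_preimage, Set.mem_Ioo] at hmem
    refine ⟨hβ, ?_⟩
    simp only [Set.mem_preimage, Set.mem_Ioo]
    constructor <;> linarith [hmem.1, hmem.2]
  have hTloThi : Tlo ⊆ Thi := hTloSx.trans hSxThi
  have hHalfTlo : I ∩ x ⁻¹' Set.Icc (x α - 1/2) (x α + 1/2) ⊆ Tlo := by
    rintro β ⟨hβ, hmem⟩
    simp only [Set.mem_preimage, Set.mem_Icc] at hmem
    refine ⟨hβ, ?_⟩
    simp only [Set.mem_preimage, Set.mem_Ioo]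
    constructor <;> linarith [hmem.1, hmem.2]
  have hdiffU : Thi \ Tlo ⊆ U1 ∪ U2 := by
    rintro β ⟨⟨hβ, hmem⟩, hnot⟩
    simp only [Set.mem_preimage, Set.mem_Ioo] at hmem
    have hnot' : ¬(x α - (1 - 2*δ) < x β ∧ x β < x α + (1 - 2*δ)) := by
      intro h
      exact hnot ⟨hβ, by simp only [Set.mem_preimage, Set.mem_Ioo]; exact h⟩
    rcases not_and_or.mp hnot' with h | h
    · push_neg at h
      left
      refine ⟨hβ, ?_⟩
      simp only [Set.mem_preimage, Set.mem_Icc]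
      constructor <;> linarith [hmem.1]
    · push_neg at h
      right
      refine ⟨hβ, ?_⟩
      simp only [Set.mem_preimage, Set.mem_Icc]
      constructor <;> linarith [hmem.2]
  -- measure estimates
  have hU1v : (volume U1).toReal ≤ M * (4*δ) := by
    refine le_trans (hupper (x α - 1 - 2*δ) (x α - 1 + 2*δ) (by linarith)) (le_of_eq ?_)
    ring
  have hU2v : (volume U2).toReal ≤ M * (4*δ) := by
    refine le_trans (hupper (x α + 1 - 2*δ) (x α + 1 + 2*δ) (by linarith)) (le_of_eq ?_)
    ring
  have hsubI : ∀ {S : Set ℝ}, S ⊆ I → S ⊆ Set.Icc (0:ℝ) 1 := fun {S} h => by rwa [hI] at h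
  have hThiv : (volume Thi).toReal ≤ (volume Tlo).toReal + M*(4*δ) + M*(4*δ) := by
    have h2 : volume Thi ≤ volume Tlo + volume U1 + volume U2 := by
      calc volume Thi ≤ volume (Tlo ∪ (U1 ∪ U2)) := measure_mono (by
              intro β hβ
              by_cases hb : β ∈ Tlo
              · exact Or.inl hb
              · exact Or.inr (hdiffU ⟨hβ, hb⟩))
        _ ≤ volume Tlo + volume (U1 ∪ U2) := measure_union_le _ _
        _ ≤ volume Tlo + (volume U1 + volume U2) := by
              exact add_le_add_right (measure_union_le _ _) _
        _ = volume Tlo + volume U1 + volume U2 := by rw [add_assoc]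
    have h3 := ENNReal.toReal_mono (by
        refine ENNReal.add_ne_top.2 ⟨ENNReal.add_ne_top.2 ⟨?_, ?_⟩, ?_⟩ <;>
          exact vol_ne_top' (hsubI (by assumption))) h2
    rw [ENNReal.toReal_add (ENNReal.add_ne_top.2 ⟨vol_ne_top' (hsubI hTloI), vol_ne_top' (hsubI hU1I)⟩)
        (vol_ne_top' (hsubI hU2I)),
      ENNReal.toReal_add (vol_ne_top' (hsubI hTloI)) (vol_ne_top' (hsubI hU1I))] at h3
    linarith
  have hcTlo : c ≤ (volume Tlo).toReal :=
    le_trans (hhalf α hα) (tv_mono' (hsubI hTloI) hHalfTlo)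
  have hcSy : c ≤ (volume Sy).toReal := le_trans hcTlo (tv_mono' (hsubI hSyI) hTloSy)
  have hcSx : c ≤ (volume Sx).toReal := le_trans hcTlo (tv_mono' (hsubI hSxI) hTloSx)
  have hSyThiv : (volume Sy).toReal ≤ (volume Thi).toReal := tv_mono' (hsubI hThiI) hSyThi
  have hSxThiv : (volume Sx).toReal ≤ (volume Thi).toReal := tv_mono' (hsubI hThiI) hSxThi
  have hTloSyv : (volume Tlo).toReal ≤ (volume Sy).toReal := tv_mono' (hsubI hSyI) hTloSy
  have hTloSxv : (volume Tlo).toReal ≤ (volume Sx).toReal := tv_mono' (hsubI hSxI) hTloSx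
  have hvdiff : |(volume Sx).toReal - (volume Sy).toReal| ≤ 8*(M*δ) := by
    rw [abs_le]; constructor <;> linarith
  -- integrability & integral bounds
  have hint : ∀ (z : ℝ → ℝ), Measurable z → (∀ γ ∈ I, z γ ∈ Set.Icc (0:ℝ) L) →
      ∀ S : Set ℝ, MeasurableSet S → S ⊆ I → IntegrableOn z S volume := by
    intro z hz hzr S hmS hSI
    refine Integrable.mono' (g := fun _ => L)
      ((integrableOn_const_iff (C := L)).mpr (Or.inr (vol_ne_top' (hsubI hSI)).lt_top))
      hz.aestronglyMeasurable.restrict ?_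
    refine ae_restrict_of_forall_mem hmS fun γ hγ => ?_
    have h1 := hzr γ (hSI hγ)
    rw [Real.norm_eq_abs, abs_le]
    exact ⟨by linarith [h1.1], h1.2⟩
  have hintb : ∀ (z : ℝ → ℝ) (C : ℝ), Measurable z → ∀ S : Set ℝ, S ⊆ I →
      (∀ γ ∈ S, |z γ| ≤ C) → |∫ β in S, z β| ≤ C * (volume S).toReal := by
    intro z C hz S hSI hb
    rw [← Real.norm_eq_abs]
    exact norm_setIntegral_le_of_norm_le_const (vol_ne_top' (hsubI hSI)).lt_top
      (fun γ hγ => by rw [Real.norm_eq_abs]; exact hb γ hγ)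
  have hxb : ∀ S : Set ℝ, S ⊆ I → ∀ γ ∈ S, |x γ| ≤ L := by
    intro S hSI γ hγ
    have h1 := hxrange γ (hSI hγ)
    rw [abs_le]; exact ⟨by linarith [h1.1], h1.2⟩
  have emono : ∀ S T : Set ℝ, MeasurableSet T → T ⊆ I → S ⊆ T →
      (∫ β in S, x β) ≤ ∫ β in T, x β := by
    intro S T hmT hTI hST
    exact setIntegral_mono_set (hint x hx hxrange T hmT hTI)
      (ae_restrict_of_forall_mem hmT fun γ hγ => (hxrange γ (hTI hγ)).1) hST.eventuallyLE
  -- e1 : numerator closeness from y to x on Sy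
  have e1 : |(∫ β in Sy, y β) - ∫ β in Sy, x β| ≤ δ := by
    rw [← integral_sub (hint y hy hyrange Sy hmSy hSyI) (hint x hx hxrange Sy hmSy hSyI)]
    refine le_trans (hintb (fun β => y β - x β) δ (hy.sub hx) Sy hSyI
      (fun γ hγ => hyδ γ (hSyI hγ))) ?_
    exact mul_le_of_le_one_right hδpos.le (hvle1 Sy hSyI)
  have e2a : (∫ β in Tlo, x β) ≤ ∫ β in Sy, x β := emono _ _ hmSy hSyI hTloSy
  have e2b : (∫ β in Sy, x β) ≤ ∫ β in Thi, x β := emono _ _ hmThi hThiI hSyThi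
  have e2c : (∫ β in Tlo, x β) ≤ ∫ β in Sx, x β := emono _ _ hmSx hSxI hTloSx
  have e2d : (∫ β in Sx, x β) ≤ ∫ β in Thi, x β := emono _ _ hmThi hThiI hSxThi
  have e3 : (∫ β in Thi, x β) - ∫ β in Tlo, x β ≤ L * (8*(M*δ)) := by
    have hdint : (∫ β in Thi \ Tlo, x β) = (∫ β in Thi, x β) - ∫ β in Tlo, x β :=
      integral_diff hmTlo (hint x hx hxrange Thi hmThi hThiI) hTloThi
    rw [← hdint]
    have hdI : Thi \ Tlo ⊆ I := fun β hβ => hThiI hβ.1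
    refine le_trans (le_trans (le_abs_self _) (hintb x L hx _ hdI (hxb _ hdI))) ?_
    have hv : (volume (Thi \ Tlo)).toReal ≤ 8*(M*δ) := by
      have h1 : volume (Thi \ Tlo) ≤ volume U1 + volume U2 :=
        le_trans (measure_mono hdiffU) (measure_union_le _ _)
      have h2 := ENNReal.toReal_mono
        (ENNReal.add_ne_top.2 ⟨vol_ne_top' (hsubI hU1I), vol_ne_top' (hsubI hU2I)⟩) h1
      rw [ENNReal.toReal_add (vol_ne_top' (hsubI hU1I)) (vol_ne_top' (hsubI hU2I))] at h2
      linarith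
    nlinarith [hL.le]
  have e4 : |(∫ β in Sy, y β) - ∫ β in Sx, x β| ≤ δ + L*(8*(M*δ)) := by
    have h5 : |(∫ β in Sy, x β) - ∫ β in Sx, x β| ≤ L*(8*(M*δ)) := by
      rw [abs_le]; constructor <;> linarith
    calc |(∫ β in Sy, y β) - ∫ β in Sx, x β|
        ≤ |(∫ β in Sy, y β) - ∫ β in Sy, x β| + |(∫ β in Sy, x β) - ∫ β in Sx, x β| :=
          abs_sub_le _ _ _
      _ ≤ δ + L*(8*(M*δ)) := add_le_add e1 h5
  have e5 : |∫ β in Sx, x β| ≤ L := by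
    refine le_trans (hintb x L hx Sx hSxI (hxb _ hSxI)) ?_
    exact mul_le_of_le_one_right hL.le (hvle1 Sx hSxI)
  -- rewrite Uop
  have hUxset : {β ∈ Set.Icc (0:ℝ) 1 | |x α - x β| < 1} = Sx := by
    ext β
    simp only [Set.mem_setOf_eq, hSxdef, Set.mem_inter_iff, Set.mem_preimage, Set.mem_Ioo,
      abs_sub_lt_iff, hI]
    constructor <;> rintro ⟨h1, h2, h3⟩ <;> exact ⟨h1, by linarith, by linarith⟩
  have hUyset : {β ∈ Set.Icc (0:ℝ) 1 | |y α - y β| < 1} = Sy := by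
    ext β
    simp only [Set.mem_setOf_eq, hSydef, Set.mem_inter_iff, Set.mem_preimage, Set.mem_Ioo,
      abs_sub_lt_iff, hI]
    constructor <;> rintro ⟨h1, h2, h3⟩ <;> exact ⟨h1, by linarith, by linarith⟩
  have hvXpos : 0 < (volume Sx).toReal := lt_of_lt_of_le hcpos hcSx
  have hvYpos : 0 < (volume Sy).toReal := lt_of_lt_of_le hcpos hcSy
  have hvSx0 : volume Sx ≠ 0 := by
    intro h0
    rw [h0] at hvXpos
    simp at hvXpos
  have hvSy0 : volume Sy ≠ 0 := by
    intro h0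
    rw [h0] at hvYpos
    simp at hvYpos
  simp only [Uop]
  rw [hUxset, hUyset, if_neg hvSy0, if_neg hvSx0]
  rw [div_sub_div _ _ (ne_of_gt hvYpos) (ne_of_gt hvXpos), abs_div,
    abs_of_pos (mul_pos hvYpos hvXpos), div_le_iff₀ (mul_pos hvYpos hvXpos)]
  have key : |(∫ β in Sy, y β) * (volume Sx).toReal -
      (volume Sy).toReal * ∫ β in Sx, x β| ≤ δ * K := by
    have hre : (∫ β in Sy, y β) * (volume Sx).toReal -
        (volume Sy).toReal * ∫ β in Sx, x β =
        ((∫ β in Sy, y β) - ∫ β in Sx, x β) * (volume Sx).toReal +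
        (∫ β in Sx, x β) * ((volume Sx).toReal - (volume Sy).toReal) := by ring
    rw [hre]
    have h1 : |(volume Sx).toReal| ≤ 1 := by
      rw [abs_of_pos hvXpos]; exact hvle1 Sx hSxI
    calc |((∫ β in Sy, y β) - ∫ β in Sx, x β) * (volume Sx).toReal +
          (∫ β in Sx, x β) * ((volume Sx).toReal - (volume Sy).toReal)|
        ≤ |((∫ β in Sy, y β) - ∫ β in Sx, x β) * (volume Sx).toReal| +
          |(∫ β in Sx, x β) * ((volume Sx).toReal - (volume Sy).toReal)| := abs_add_le _ _
      _ = |(∫ β in Sy, y β) - ∫ β in Sx, x β| * |(volume Sx).toReal| +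
          |∫ β in Sx, x β| * |(volume Sx).toReal - (volume Sy).toReal| := by
            rw [abs_mul, abs_mul]
      _ ≤ (δ + L*(8*(M*δ))) * 1 + L * (8*(M*δ)) := by
            refine add_le_add (mul_le_mul e4 h1 (abs_nonneg _) (by positivity))
              (mul_le_mul e5 hvdiff (abs_nonneg _) hL.le)
      _ ≤ δ * K := by rw [hK]; nlinarith [hδpos.le]
  refine le_trans key ?_
  have hδK : δ * K ≤ ε * c^2 := by
    have h6 : δ ≤ ε * c^2 / K := min_le_right _ _
    calc δ * K ≤ (ε * c^2 / K) * K := by nlinarith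
      _ = ε * c^2 := div_mul_cancel₀ _ (ne_of_gt hKpos)
  refine le_trans hδK ?_
  have h7 : c * c ≤ (volume Sy).toReal * (volume Sx).toReal :=
    mul_le_mul hcSy hcSx hcpos.le (le_trans hcpos.le hcSy)
  nlinarith [hε, sq_nonneg c]
end
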